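/- arXiv:2308.00693 — 9 statements merged into one kernel-verified Lean document; each statement's English description precedes it below -/
import Mathlib

section
/- If V is a vertex algebra with an odd endomorphism D satisfying [D,D] = 2∂ (supercommutator), D is an odd derivation of the normally ordered product, and D is an odd derivation of the λ-bracket (i.e. D[a_λ b] = [Da_λ b] + (-1)^{p(a)}[a_λ Db] with [D,λ]=0), then the Λ-bracket defined by [a_Λ b] := [Da_λ b] + χ[a_λ b] satisfies the non-commutative Wick formula of N=1 SUSY vertex algebras: [a_Λ :bc:] = :[a_Λ b]c: + (-1)^{(p(a)+1)p(b)}:b[a_Λ c]: + ∫_0^Λ [[a_Λ b]_Γ c] dΓ. -/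
open scoped BigOperators
noncomputable section

namespace VAx

/-- `(-1)^p` for a parity `p` (`true` = odd). -/
def psgn (p : Bool) : ℂ := if p then -1 else 1

/-- `(-1)^{pq}` for parities `p`, `q`. -/
def sgn (p q : Bool) : ℂ := if p && q then -1 else 1

/-- Multiplication by `λ` on a `λ`-expansion `f = ∑ λ^m • f m`. -/
def lam {W : Type*} [AddCommGroup W] (f : ℕ → W) : ℕ → W :=
  fun m => match m with
  | 0 => 0
  | n + 1 => f n

variable (V : Type*) [AddCommGroup V] [Module ℂ V]

/-- Underlying data of a (super) Lie conformal algebra: a `ℤ/2ℤ`-grading (`part false` the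
even part, `part true` the odd part), an even derivation `∂ = der`, and a `λ`-bracket encoded
by its coefficients: `[a_λ b] = ∑_m λ^m • B a b m` (so `B a b m = a_{(m)} b / m!`). -/
structure LCAData where
  part : Bool → Submodule ℂ V
  der : V →ₗ[ℂ] V
  B : V →ₗ[ℂ] V →ₗ[ℂ] (ℕ → V)

/-- Underlying data of a vertex algebra: a Lie conformal algebra datum together with a
vacuum vector and the normally ordered product. -/
structure VAData extends LCAData V where
  one : V
  M : V →ₗ[ℂ] V →ₗ[ℂ] V

variable {V}

namespace LCAData

variable (S : LCAData V)

/-- Coefficientwise form of the Jacobi identity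
`[a_λ [b_γ c]] = [[a_λ b]_{λ+γ} c] + (-1)^{p(a)p(b)} [b_γ [a_λ c]]`
at the coefficient of `λ^m γ^n`. -/
def JacEq (p q : Bool) (a b c : V) (m n : ℕ) : Prop :=
  S.B a (S.B b c n) m =
    (∑ j ∈ Finset.range (m + 1),
      ((Nat.choose (m - j + n) (m - j) : ℂ)) • S.B (S.B a b j) c (m - j + n))
    + sgn p q • S.B b (S.B a c m) n

/-- Coefficientwise form of skew-symmetry `[b_λ a] = (-1)^{p(a)p(b)+1}[a_{-∂-λ} b]`,
given a bound `N` on the support of `[a_λ b]`. -/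
def SkewEq (p q : Bool) (a b : V) (N : ℕ) : Prop :=
  ∀ k, S.B b a k = (- sgn p q) •
    ∑ m ∈ Finset.Icc k N, (((-1 : ℂ)) ^ m * (m.choose k : ℂ)) • ((S.der ^ (m - k)) (S.B a b m))

/-- The axioms of a (super) Lie conformal algebra, expressed coefficientwise on the
`λ`-expansion `[a_λ b] = ∑ λ^m • B a b m`. -/
structure IsLCA : Prop where
  hom_der : ∀ p, ∀ a ∈ S.part p, S.der a ∈ S.part p
  hom_B : ∀ p q a b, a ∈ S.part p → b ∈ S.part q → ∀ m, S.B a b m ∈ S.part (xor p q)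
  sesq1 : ∀ a b, S.B (S.der a) b 0 = 0 ∧ ∀ m, S.B (S.der a) b (m + 1) = - S.B a b m
  sesq2 : ∀ a b, S.B a (S.der b) 0 = S.der (S.B a b 0) ∧
    ∀ m, S.B a (S.der b) (m + 1) = S.der (S.B a b (m + 1)) + S.B a b m
  bfin : ∀ a b, ∃ N, ∀ m, N ≤ m → S.B a b m = 0
  skew : ∀ p q a b N, a ∈ S.part p → b ∈ S.part q →
    (∀ m, N ≤ m → S.B a b m = 0) → S.SkewEq p q a b N
  jacobi : ∀ p q a b c, a ∈ S.part p → b ∈ S.part q → ∀ m n, S.JacEq p q a b c m n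

/-- The supersymmetric extension formulas (SEF1) and (SEF2) for the ordered pair `(x, y)`
(thought of as `(ā, b̄)`), where `p` is the parity of `x` and `D` is the odd endomorphism:
(SEF1) `[Dx_λ Dy] = (-1)^{p(x)+1}(D[Dx_λ y] + λ[x_λ y])`,
(SEF2) `[x_λ Dy] = (-1)^{p(x)+1}([Dx_λ y] - D[x_λ y])`. -/
def SEF (D : Module.End ℂ V) (p : Bool) (x y : V) : Prop :=
  (∀ m, S.B (D x) (D y) m = psgn (!p) • (D (S.B (D x) y m) + lam (S.B x y) m)) ∧
  (∀ m, S.B x (D y) m = psgn (!p) • (S.B (D x) y m - D (S.B x y m)))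

end LCAData

namespace VAData

variable (S : VAData V)

/-- The integral term `∫_0^λ [[a_λ b]_γ c] dγ` of the non-commutative Wick formula, at the
coefficient of `λ^k`, where `f` is the `λ`-expansion of `[a_λ b]`. -/
def wickInt (f : ℕ → V) (c : V) : ℕ → V :=
  fun k => ∑ n ∈ Finset.range k, ((n + 1 : ℂ))⁻¹ • S.B (f (k - 1 - n)) c n

/-- The axioms of a vertex algebra, in the `λ`-bracket formalism, expressed coefficientwise. -/
structure IsVA : Prop where
  isLCA : S.toLCAData.IsLCA
  one_even : S.one ∈ S.part false
  der_one : S.der S.one = 0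
  M_one_left : ∀ a, S.M S.one a = a
  M_one_right : ∀ a, S.M a S.one = a
  B_one_left : ∀ a m, S.B S.one a m = 0
  B_one_right : ∀ a m, S.B a S.one m = 0
  hom_M : ∀ p q a b, a ∈ S.part p → b ∈ S.part q → S.M a b ∈ S.part (xor p q)
  qcomm : ∀ p q a b N, a ∈ S.part p → b ∈ S.part q → (∀ m, N ≤ m → S.B a b m = 0) →
    S.M a b - sgn p q • S.M b a =
      ∑ m ∈ Finset.range (N + 1),
        (((-1 : ℂ) ^ m) * ((m + 1 : ℂ))⁻¹) • ((S.der ^ (m + 1)) (S.B a b m))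
  wick : ∀ p q a b c, a ∈ S.part p → b ∈ S.part q → ∀ k,
    S.B a (S.M b c) k = S.M (S.B a b k) c + sgn p q • S.M b (S.B a c k)
      + S.wickInt (S.B a b) c k

/-- `D` is an odd endomorphism of `V` which is an odd derivation of both the normally ordered
product and the `λ`-bracket. -/
def IsOddDerivation (D : Module.End ℂ V) : Prop :=
  (∀ p, ∀ a ∈ S.part p, D a ∈ S.part (!p)) ∧
  (∀ p a b, a ∈ S.part p → D (S.M a b) = S.M (D a) b + psgn p • S.M a (D b)) ∧
  (∀ p a b m, a ∈ S.part p → D (S.B a b m) = S.B (D a) b m + psgn p • S.B a (D b) m)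

/-- The operator `x ↦ a_{(k)} x` (normalized by `1/k!`). -/
def opAt (a : V) (k : ℕ) : Module.End ℂ V :=
  (LinearMap.proj (R := ℂ) (φ := fun _ : ℕ => V) k).comp (S.B a)

/-- Diagonalizability of an endomorphism. -/
def IsDiag (f : Module.End ℂ V) : Prop :=
  (⨆ μ : ℂ, f.eigenspace μ) = ⊤

/-- `G` is an `N = 1` superconformal vector of `V` with central charge `c`: `G` is odd,
`L := (1/2) G_{(0)} G` is a conformal vector (`L_{(0)} = ∂`, `L_{(1)}` diagonalizable), and the
super-Virasoro relations `[L_λ L] = (∂+2λ)L + (c/12)λ³ |0⟩`, `[L_λ G] = (∂ + (3/2)λ)G`,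
`[G_λ G] = 2L + (c/3)λ² |0⟩` hold. -/
def IsSCV (G : V) (c : ℂ) : Prop :=
  G ∈ S.part true ∧
  S.B G G 1 = 0 ∧
  S.B G G 2 = (c / 3) • S.one ∧
  (∀ m, 3 ≤ m → S.B G G m = 0) ∧
  (S.B ((1 / 2 : ℂ) • S.B G G 0) ((1 / 2 : ℂ) • S.B G G 0) = fun m =>
    match m with
    | 0 => S.der ((1 / 2 : ℂ) • S.B G G 0)
    | 1 => (2 : ℂ) • ((1 / 2 : ℂ) • S.B G G 0)
    | 3 => (c / 12) • S.one
    | _ => 0) ∧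
  (S.B ((1 / 2 : ℂ) • S.B G G 0) G = fun m =>
    match m with
    | 0 => S.der G
    | 1 => (3 / 2 : ℂ) • G
    | _ => 0) ∧
  (∀ x, S.B ((1 / 2 : ℂ) • S.B G G 0) x 0 = S.der x) ∧
  IsDiag (S.opAt ((1 / 2 : ℂ) • S.B G G 0) 1)

/-- The `N = 1` `Λ`-bracket `[a_Λ b] := [Da_λ b] + χ[a_λ b]`, encoded as the pair
`(λ`-expansion of `[Da_λ b]`, `λ`-expansion of `[a_λ b])` (the second component being the
coefficient of `χ`). -/
def SB (D : Module.End ℂ V) (a b : V) : (ℕ → V) × (ℕ → V) :=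
  (S.B (D a) b, S.B a b)

end VAData

end VAx

open VAx VAx.LCAData VAx.VAData

/-- If `V` is a vertex algebra with an odd endomorphism `D` satisfying
`[D,D] = 2∂` (i.e. `D² = ∂`), which is an odd derivation of the normally ordered product and of
the `λ`-bracket, then the `Λ`-bracket `[a_Λ b] := [Da_λ b] + χ[a_λ b]` satisfies the
non-commutative Wick formula of `N = 1` SUSY vertex algebras
`[a_Λ :bc:] = :[a_Λ b]c: + (-1)^{(p(a)+1)p(b)} :b[a_Λ c]: + ∫_0^Λ [[a_Λ b]_Γ c] dΓ`,
written out componentwise (first component: coefficient of `χ^0`; second: coefficient of `χ`). -/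
theorem stmt_0 {V : Type*} [AddCommGroup V] [Module ℂ V]
    (S : VAx.VAData V) (hS : S.IsVA) (D : Module.End ℂ V)
    (hD : S.IsOddDerivation D) (hDD : ∀ x, D (D x) = S.der x) :
    ∀ (p q : Bool) (a b c : V), a ∈ S.part p → b ∈ S.part q →
      S.SB D a (S.M b c) =
        ( (fun m => S.M (S.B (D a) b m) c
            + VAx.sgn (!p) q • S.M b (S.B (D a) c m)
            + S.wickInt (S.B (D a) b) c m),
          (fun m => S.M (S.B a b m) c
            + (VAx.sgn (!p) q * VAx.psgn q) • S.M b (S.B a c m)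
            + S.wickInt (S.B a b) c m) ) := by
  intro p q a b c ha hb
  have hDa : D a ∈ S.part (!p) := hD.1 p a ha
  refine Prod.ext ?_ ?_
  · funext m
    exact hS.wick (!p) q (D a) b c hDa hb m
  · funext m
    have := hS.wick p q a b c ha hb m
    have hsgn : VAx.sgn (!p) q * VAx.psgn q = VAx.sgn p q := by
      cases p <;> cases q <;> simp [VAx.sgn, VAx.psgn]
    rw [VAx.VAData.SB] at *
    simpa [hsgn] using this
end
end

section
/- Let V be an N=1 superconformal vertex algebra with superconformal vector G, conformal vector L of central charge c, and an odd vector v satisfying [L_λ v] = (∂+λ/2)v, [G_λ v] = G_{(0)}v + c₁λ, [v_λ v] = c₂, with (G_{(0)}v)_{(0)} diagonalizable. Then G + ∂v is also a superconformal vector of V, with corresponding conformal vector L + (1/2)∂G_{(0)}v of central charge c + 6c₁ - 3c₂. -/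
open scoped BigOperators
noncomputable section

open VAx VAx.LCAData VAx.VAData

section Aux

open Module

variable {V : Type*} [AddCommGroup V] [Module ℂ V]

lemma eig_comp_mem (f : Module.End ℂ V) (p : Submodule ℂ V) (hp : ∀ x ∈ p, f x ∈ p) :
    ∀ s : Finset ℂ, ∀ m : ℂ → V, (∀ μ ∈ s, m μ ∈ f.eigenspace μ) →
      (∑ μ ∈ s, m μ) ∈ p → ∀ μ ∈ s, m μ ∈ p := by
  intro s
  induction s using Finset.induction_on with
  | empty => simp
  | @insert a s ha ih =>
    intro m hm hsum μ hμ
    have hsum' : (∑ μ ∈ s, ((μ - a) • m μ)) ∈ p := by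
      have h1 : f (∑ μ ∈ insert a s, m μ) - a • (∑ μ ∈ insert a s, m μ) ∈ p :=
        p.sub_mem (hp _ hsum) (p.smul_mem _ hsum)
      have h2 : f (∑ μ ∈ insert a s, m μ) - a • (∑ μ ∈ insert a s, m μ)
          = ∑ μ ∈ s, ((μ - a) • m μ) := by
        rw [map_sum, Finset.smul_sum, ← Finset.sum_sub_distrib, Finset.sum_insert ha]
        rw [Module.End.mem_eigenspace_iff.mp (hm a (Finset.mem_insert_self a s))]
        rw [sub_self, zero_add]
        refine Finset.sum_congr rfl fun μ hμ => ?_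
        rw [Module.End.mem_eigenspace_iff.mp (hm μ (Finset.mem_insert_of_mem hμ)), sub_smul]
      rwa [h2] at h1
    have hcomp : ∀ ν ∈ s, m ν ∈ p := by
      intro ν hν
      have hmem := ih (fun μ => (μ - a) • m μ)
        (fun μ hμ => Submodule.smul_mem _ _ (hm μ (Finset.mem_insert_of_mem hμ))) hsum' ν hν
      have hne : ν - a ≠ 0 := sub_ne_zero.mpr (by rintro rfl; exact ha hν)
      have := p.smul_mem (ν - a)⁻¹ hmem
      rwa [smul_smul, inv_mul_cancel₀ hne, one_smul] at this
    rcases Finset.mem_insert.mp hμ with rfl | hμ'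
    · have : m μ = (∑ x ∈ insert μ s, m x) - ∑ x ∈ s, m x := by
        rw [Finset.sum_insert ha]; abel
      rw [this]
      exact p.sub_mem hsum (Submodule.sum_mem _ hcomp)
    · exact hcomp μ hμ'

lemma isDiag_add_of_commute' {f g : Module.End ℂ V} (hc : Commute f g)
    (hf : VAx.VAData.IsDiag f) (hg : VAx.VAData.IsDiag g) : VAx.VAData.IsDiag (f + g) := by
  rw [VAx.VAData.IsDiag] at hf hg ⊢
  rw [eq_top_iff, ← hg]
  refine iSup_le fun ν x hx => ?_
  have hxf : x ∈ ⨆ μ : ℂ, f.eigenspace μ := hf ▸ Submodule.mem_top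
  obtain ⟨m, hm, rfl⟩ := (Submodule.mem_iSup_iff_exists_finsupp _ _).mp hxf
  have hinv : ∀ y ∈ Module.End.eigenspace g ν, f y ∈ Module.End.eigenspace g ν := by
    intro y hy
    rw [Module.End.mem_eigenspace_iff] at hy ⊢
    have hfg : f (g y) = g (f y) := by
      simpa [Module.End.mul_apply] using DFunLike.congr_fun hc y
    rw [← hfg, hy, map_smul]
  have hx' : (∑ μ ∈ m.support, m μ) ∈ Module.End.eigenspace g ν := hx
  have hcm := eig_comp_mem f _ hinv m.support m (fun μ _ => hm μ) hx'
  show (∑ μ ∈ m.support, m μ) ∈ _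
  refine Submodule.sum_mem _ fun μ hμ => ?_
  refine Submodule.mem_iSup_of_mem (μ + ν) ?_
  rw [Module.End.mem_eigenspace_iff]
  have h1 := Module.End.mem_eigenspace_iff.mp (hm μ)
  have h2 := Module.End.mem_eigenspace_iff.mp (hcm μ hμ)
  simp [LinearMap.add_apply, h1, h2, add_smul]

lemma isDiag_smul' (c : ℂ) {f : Module.End ℂ V} (hf : VAx.VAData.IsDiag f) :
    VAx.VAData.IsDiag (c • f) := by
  rw [VAx.VAData.IsDiag] at hf ⊢
  rw [eq_top_iff, ← hf]
  refine iSup_le fun μ x hx => ?_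
  refine Submodule.mem_iSup_of_mem (c * μ) ?_
  rw [Module.End.mem_eigenspace_iff] at hx ⊢
  rw [LinearMap.smul_apply, hx, smul_smul]

end Aux

/-- (Shift of a superconformal vector.) Let `V` be an `N = 1` superconformal
vertex algebra with superconformal vector `G`, conformal vector `L = (1/2)G_{(0)}G` of central
charge `c`, and an odd vector `v` satisfying `[L_λ v] = (∂+λ/2)v`, `[G_λ v] = G_{(0)}v + c₁λ`,
`[v_λ v] = c₂`, with `(G_{(0)}v)_{(0)}` diagonalizable. Then `G + ∂v` is also a superconformal
vector of `V`, with corresponding conformal vector `L + (1/2)∂(G_{(0)}v)` of central charge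
`c + 6c₁ - 3c₂`. -/
theorem stmt_3 {V : Type*} [AddCommGroup V] [Module ℂ V]
    (S : VAx.VAData V) (hS : S.IsVA) (G L v : V) (c c₁ c₂ : ℂ)
    (hGsc : S.IsSCV G c) (hLdef : L = (1 / 2 : ℂ) • S.B G G 0)
    (hv : v ∈ S.part true)
    (hLv : S.B L v = fun m => match m with
      | 0 => S.der v
      | 1 => (1 / 2 : ℂ) • v
      | _ => 0)
    (hGv1 : S.B G v 1 = c₁ • S.one) (hGv2 : ∀ m, 2 ≤ m → S.B G v m = 0)
    (hvv : S.B v v = fun m => if m = 0 then c₂ • S.one else 0)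
    (hdiag : IsDiag (S.opAt (S.B G v 0) 0)) :
    S.IsSCV (G + S.der v) (c + 6 * c₁ - 3 * c₂) ∧
    (1 / 2 : ℂ) • S.B (G + S.der v) (G + S.der v) 0
      = L + (1 / 2 : ℂ) • S.der (S.B G v 0) := by
  classical
  obtain ⟨hG, hGG1, hGG2, hGG3, hLL, hLG, hL0, hLdiag⟩ := hGsc
  rw [← hLdef] at hLL hLG hL0 hLdiag
  have hlca := hS.isLCA
  have hjac := hlca.jacobi
  have hskew := hlca.skew
  have hs1 := hlca.sesq1
  have hs2 := hlca.sesq2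
  have honeR := hS.B_one_right
  have honeL := hS.B_one_left
  have hd1 := hS.der_one
  -- pointwise values of the given function equalities
  have hLv0 : S.B L v 0 = S.der v := by rw [hLv]; rfl
  have hLv1 : S.B L v 1 = (1/2 : ℂ) • v := by rw [hLv]; rfl
  have hLvp : ∀ m, 2 ≤ m → S.B L v m = 0 := by
    intro m hm; obtain ⟨k, rfl⟩ : ∃ k, m = k + 2 := ⟨m - 2, by omega⟩
    rw [hLv]; rfl
  have hLG0 : S.B L G 0 = S.der G := by rw [hLG]; rfl
  have hLG1 : S.B L G 1 = (3/2 : ℂ) • G := by rw [hLG]; rfl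
  have hLGp : ∀ m, 2 ≤ m → S.B L G m = 0 := by
    intro m hm; obtain ⟨k, rfl⟩ : ∃ k, m = k + 2 := ⟨m - 2, by omega⟩
    rw [hLG]; rfl
  have hLL0 : S.B L L 0 = S.der L := by rw [hLL]; rfl
  have hLL1 : S.B L L 1 = (2 : ℂ) • L := by rw [hLL]; rfl
  have hLL2 : S.B L L 2 = 0 := by rw [hLL]; rfl
  have hLL3 : S.B L L 3 = (c/12 : ℂ) • S.one := by rw [hLL]; rfl
  have hLLp : ∀ m, 4 ≤ m → S.B L L m = 0 := by
    intro m hm; obtain ⟨k, rfl⟩ : ∃ k, m = k + 4 := ⟨m - 4, by omega⟩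
    rw [hLL]; rfl
  have hvv0 : S.B v v 0 = c₂ • S.one := by rw [hvv]; simp
  have hvvp : ∀ m, 1 ≤ m → S.B v v m = 0 := by
    intro m hm; obtain ⟨k, rfl⟩ : ∃ k, m = k + 1 := ⟨m - 1, by omega⟩
    rw [hvv]; simp
  -- parities
  have hLp : L ∈ S.part false := by
    rw [hLdef]; exact Submodule.smul_mem _ _ (hlca.hom_B true true G G hG hG 0)
  set u := S.B G v 0 with hu_def
  have hup : u ∈ S.part false := hlca.hom_B true true G v hG hv 0
  have hdvp : S.der v ∈ S.part true := hlca.hom_der true v hv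
  have hBGG0 : S.B G G 0 = (2 : ℂ) • L := by rw [hLdef]; module
  -- B G (der v)
  have hGdv0 : S.B G (S.der v) 0 = S.der u := (hs2 G v).1
  have hGdv1 : S.B G (S.der v) 1 = u := by
    have h := (hs2 G v).2 0
    simpa [hGv1, hd1, ← hu_def] using h
  have hGdv2 : S.B G (S.der v) 2 = c₁ • S.one := by
    have h := (hs2 G v).2 1
    simpa [hGv1, hGv2 2 le_rfl] using h
  have hGdvp : ∀ m, 3 ≤ m → S.B G (S.der v) m = 0 := by
    intro m hm; obtain ⟨k, rfl⟩ : ∃ k, m = k + 3 := ⟨m - 3, by omega⟩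
    have h := (hs2 G v).2 (k + 2)
    simpa [hGv2 (k+3) (by omega), hGv2 (k+2) (by omega), show k+2+1 = k+3 from rfl] using h
  -- B v G via skew symmetry
  have hskGv := hskew true true G v 2 hG hv hGv2
  have hIcc02 : Finset.Icc (0:ℕ) 2 = {0,1,2} := by decide
  have hIcc12 : Finset.Icc (1:ℕ) 2 = {1,2} := by decide
  have hvG0 : S.B v G 0 = u := by
    have h := hskGv 0
    rw [hIcc02, Finset.sum_insert (by decide), Finset.sum_insert (by decide),
      Finset.sum_singleton] at h
    rw [hGv1, hGv2 2 le_rfl] at h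
    simpa [sgn, hd1, ← hu_def] using h
  have hvG1 : S.B v G 1 = -(c₁ • S.one) := by
    have h := hskGv 1
    rw [hIcc12, Finset.sum_insert (by decide), Finset.sum_singleton] at h
    rw [hGv1, hGv2 2 le_rfl] at h
    simpa [sgn, hd1] using h
  have hvGp : ∀ m, 2 ≤ m → S.B v G m = 0 := by
    intro m hm
    have h := hskGv m
    rw [Finset.sum_eq_zero, smul_zero] at h
    · exact h
    · intro i hi
      rw [hGv2 i (le_trans hm (Finset.mem_Icc.mp hi).1), map_zero, smul_zero]
  -- B (der v) G
  have hdvG0 : S.B (S.der v) G 0 = 0 := (hs1 v G).1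
  have hdvG1 : S.B (S.der v) G 1 = -u := by
    have h := (hs1 v G).2 0; rw [hvG0] at h; exact h
  have hdvG2 : S.B (S.der v) G 2 = c₁ • S.one := by
    have h := (hs1 v G).2 1; rw [hvG1] at h; simpa using h
  have hdvGp : ∀ m, 3 ≤ m → S.B (S.der v) G m = 0 := by
    intro m hm; obtain ⟨k, rfl⟩ : ∃ k, m = k + 3 := ⟨m - 3, by omega⟩
    have h := (hs1 v G).2 (k + 2); rw [hvGp (k+2) (by omega)] at h; simpa using h
  -- B v (der v)
  have hvdv0 : S.B v (S.der v) 0 = 0 := by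
    have h := (hs2 v v).1; rw [hvv0] at h; simpa [hd1] using h
  have hvdv1 : S.B v (S.der v) 1 = c₂ • S.one := by
    have h := (hs2 v v).2 0
    simpa [hvv0, hvvp 1 le_rfl] using h
  have hvdvp : ∀ m, 2 ≤ m → S.B v (S.der v) m = 0 := by
    intro m hm; obtain ⟨k, rfl⟩ : ∃ k, m = k + 2 := ⟨m - 2, by omega⟩
    have h := (hs2 v v).2 (k + 1)
    simpa [hvvp (k+2) (by omega), hvvp (k+1) (by omega), show k+1+1 = k+2 from rfl] using h
  -- B (der v) (der v)
  have hdvdv0 : S.B (S.der v) (S.der v) 0 = 0 := (hs1 v (S.der v)).1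
  have hdvdv1 : S.B (S.der v) (S.der v) 1 = 0 := by
    have h := (hs1 v (S.der v)).2 0; rw [hvdv0] at h; simpa using h
  have hdvdv2 : S.B (S.der v) (S.der v) 2 = -(c₂ • S.one) := by
    have h := (hs1 v (S.der v)).2 1; rw [hvdv1] at h; exact h
  have hdvdvp : ∀ m, 3 ≤ m → S.B (S.der v) (S.der v) m = 0 := by
    intro m hm; obtain ⟨k, rfl⟩ : ∃ k, m = k + 3 := ⟨m - 3, by omega⟩
    have h := (hs1 v (S.der v)).2 (k + 2); rw [hvdvp (k+2) (by omega)] at h; simpa using h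
  -- expansion of B (G + der v) (G + der v)
  have hexp : ∀ m, S.B (G + S.der v) (G + S.der v) m
      = S.B G G m + S.B G (S.der v) m + S.B (S.der v) G m + S.B (S.der v) (S.der v) m := by
    intro m
    simp only [map_add, LinearMap.add_apply, Pi.add_apply]
    abel
  have hG'G'0 : S.B (G + S.der v) (G + S.der v) 0 = (2:ℂ) • L + S.der u := by
    rw [hexp 0, hBGG0, hGdv0, hdvG0, hdvdv0]; abel
  have hG'G'1 : S.B (G + S.der v) (G + S.der v) 1 = 0 := by
    rw [hexp 1, hGG1, hGdv1, hdvG1, hdvdv1]; abel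
  have hG'G'2 : S.B (G + S.der v) (G + S.der v) 2 = ((c + 6*c₁ - 3*c₂)/3) • S.one := by
    rw [hexp 2, hGG2, hGdv2, hdvG2, hdvdv2]; module
  have hG'G'p : ∀ m, 3 ≤ m → S.B (G + S.der v) (G + S.der v) m = 0 := by
    intro m hm
    rw [hexp m, hGG3 m hm, hGdvp m hm, hdvGp m hm, hdvdvp m hm]; simp
  have hL' : (1/2 : ℂ) • S.B (G + S.der v) (G + S.der v) 0 = L + (1/2 : ℂ) • S.der u := by
    rw [hG'G'0]; module
  -- B G u via Jacobi (a = b = G, c = v)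
  have hGu0 : S.B G u 0 = S.der v := by
    have hj := hjac true true G G v hG hG 0 0
    simp only [LCAData.JacEq] at hj
    rw [Finset.sum_range_one, hBGG0, ← hu_def] at hj
    simp only [sgn, Nat.sub_zero, Nat.add_zero, Nat.zero_sub, add_zero, Nat.choose_self,
      Nat.cast_one, one_smul, map_smul, LinearMap.smul_apply, Pi.smul_apply, hLv0,
      Bool.and_self, if_true, neg_smul, one_smul] at hj
    linear_combination (norm := module) (2⁻¹ : ℂ) • hj
  have hGu1 : S.B G u 1 = v := by
    have hj := hjac true true G G v hG hG 1 0
    simp only [LCAData.JacEq] at hj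
    rw [Finset.sum_range_succ, Finset.sum_range_one, hBGG0, hGG1, hGv1, ← hu_def] at hj
    simp only [sgn, Bool.and_self, if_true] at hj
    norm_num [map_smul, LinearMap.smul_apply, Pi.smul_apply, hLv1, honeR, map_zero,
      LinearMap.zero_apply, Pi.zero_apply] at hj
    linear_combination (norm := module) hj
  have hGup : ∀ m, 2 ≤ m → S.B G u m = 0 := by
    intro m hm; obtain ⟨k, rfl⟩ : ∃ k, m = k + 2 := ⟨m - 2, by omega⟩
    have hj := hjac true true G G v hG hG (k+2) 0
    simp only [LCAData.JacEq] at hj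
    rw [Finset.sum_eq_zero] at hj
    · rw [hGv2 (k+2) (by omega), ← hu_def] at hj
      simpa [sgn] using hj
    · intro j hj'
      rcases Nat.lt_or_ge j 3 with h3 | h3
      · interval_cases j
        · rw [hBGG0]
          simp [map_smul, LinearMap.smul_apply, Pi.smul_apply, hLvp (k+2) (by omega)]
        · rw [hGG1]; simp
        · rw [hGG2]; simp [map_smul, LinearMap.smul_apply, Pi.smul_apply, honeL]
      · rw [hGG3 j h3]; simp
  -- B u G via skew symmetry
  have hskGu := hskew true false G u 2 hG hup hGup
  have huG0 : S.B u G 0 = 0 := by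
    have h := hskGu 0
    rw [hIcc02, Finset.sum_insert (by decide), Finset.sum_insert (by decide),
      Finset.sum_singleton] at h
    rw [hGu0, hGu1, hGup 2 le_rfl] at h
    norm_num [sgn, pow_one] at h
    linear_combination (norm := module) h
  have huG1 : S.B u G 1 = v := by
    have h := hskGu 1
    rw [hIcc12, Finset.sum_insert (by decide), Finset.sum_singleton] at h
    rw [hGu1, hGup 2 le_rfl] at h
    norm_num [sgn] at h
    linear_combination (norm := module) h
  have huGp : ∀ m, 2 ≤ m → S.B u G m = 0 := by
    intro m hm
    have h := hskGu m
    rw [Finset.sum_eq_zero, smul_zero] at h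
    · exact h
    · intro i hi
      rw [hGup i (le_trans hm (Finset.mem_Icc.mp hi).1), map_zero, smul_zero]
  -- B u v vanishes
  have hBuvp : ∀ k, S.B u v (k+1) = 0 := by
    intro k
    have hj := hjac true true G v v hG hv 1 k
    simp only [LCAData.JacEq] at hj
    rw [Finset.sum_range_succ, Finset.sum_range_one] at hj
    have hLHS : S.B G (S.B v v k) 1 = 0 := by
      rcases k with _ | k
      · rw [hvv0]; simp [honeR]
      · rw [hvvp (k+1) (by omega)]; simp
    rw [hLHS, hGv1, ← hu_def] at hj
    simp only [sgn, Bool.and_self, if_true, Nat.sub_zero, Nat.sub_self, Nat.one_add,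
      Nat.choose_one_right, Nat.choose_zero_right, Nat.cast_one, one_smul, Nat.zero_add,
      zero_add] at hj
    norm_num [honeL, honeR, map_smul, LinearMap.smul_apply, Pi.smul_apply] at hj
    have hcast : (k : ℂ) + 1 ≠ 0 := by
      have := Nat.cast_add_one_ne_zero (R := ℂ) k
      simpa using this
    have h2 : ((k : ℂ) + 1) • S.B u v (k+1) = 0 := by
      linear_combination (norm := module) -hj
    calc S.B u v (k+1) = ((k : ℂ) + 1)⁻¹ • (((k : ℂ) + 1) • S.B u v (k+1)) := by
          rw [smul_smul, inv_mul_cancel₀ hcast, one_smul]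
      _ = 0 := by rw [h2, smul_zero]
  have huvvanish : ∀ m, 1 ≤ m → S.B u v m = 0 := by
    intro m hm; obtain ⟨k, rfl⟩ : ∃ k, m = k + 1 := ⟨m - 1, by omega⟩; exact hBuvp k
  have hskuv := hskew false true u v 1 hup hv huvvanish
  have hBvu0 : S.B v u 0 = -S.B u v 0 := by
    have h := hskuv 0
    rw [show Finset.Icc (0:ℕ) 1 = {0,1} by decide, Finset.sum_insert (by decide),
      Finset.sum_singleton] at h
    rw [hBuvp 0] at h
    norm_num [sgn] at h
    linear_combination (norm := module) h
  have huv0 : S.B u v 0 = 0 := by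
    have hj := hjac true true G v v hG hv 0 0
    simp only [LCAData.JacEq] at hj
    rw [Finset.sum_range_one, hvv0, ← hu_def] at hj
    simp only [sgn, Bool.and_self, if_true, Nat.sub_zero, Nat.zero_add, add_zero,
      Nat.choose_self, Nat.cast_one, one_smul, neg_smul] at hj
    norm_num [honeR, map_smul, LinearMap.smul_apply, Pi.smul_apply] at hj
    have h3 : S.B u v 0 = S.B v u 0 := by linear_combination (norm := module) -hj
    linear_combination (norm := module) (2⁻¹:ℂ) • h3 + (2⁻¹:ℂ) • hBvu0
  have hBuv : ∀ m, S.B u v m = 0 := by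
    intro m; rcases m with _ | k
    · exact huv0
    · exact hBuvp k
  have hBvu : ∀ m, S.B v u m = 0 := by
    intro m
    have h := hskuv m
    rw [Finset.sum_eq_zero, smul_zero] at h
    · exact h
    · intro i hi; rw [hBuv i, map_zero, smul_zero]
  have hudv : ∀ m, S.B u (S.der v) m = 0 := by
    intro m; rcases m with _ | k
    · have h := (hs2 u v).1; rw [hBuv 0] at h; simpa using h
    · have h := (hs2 u v).2 k; rw [hBuv (k+1), hBuv k] at h; simpa using h
  have hdudv : ∀ m, S.B (S.der u) (S.der v) m = 0 := by
    intro m; rcases m with _ | k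
    · exact (hs1 u (S.der v)).1
    · have h := (hs1 u (S.der v)).2 k; rw [hudv k] at h; simpa using h
  -- B L u via Jacobi (a = L, b = G, c = v)
  have hdGv0 : S.B (S.der G) v 0 = 0 := (hs1 G v).1
  have hdGv1 : S.B (S.der G) v 1 = -u := by
    have h := (hs1 G v).2 0; rwa [← hu_def] at h
  have hdGv2 : S.B (S.der G) v 2 = -(c₁ • S.one) := by
    have h := (hs1 G v).2 1; rwa [hGv1] at h
  have hdGvp : ∀ m, 3 ≤ m → S.B (S.der G) v m = 0 := by
    intro m hm; obtain ⟨k, rfl⟩ : ∃ k, m = k + 3 := ⟨m - 3, by omega⟩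
    have h := (hs1 G v).2 (k+2); rw [hGv2 (k+2) (by omega)] at h; simpa using h
  have hLu0 : S.B L u 0 = S.der u := by
    have hj := hjac false true L G v hLp hG 0 0
    simp only [LCAData.JacEq] at hj
    rw [Finset.sum_range_one, hLG0, hLv0, hdGv0, hGdv0] at hj
    simpa [sgn, ← hu_def] using hj
  have hLu1 : S.B L u 1 = u := by
    have hj := hjac false true L G v hLp hG 1 0
    simp only [LCAData.JacEq] at hj
    rw [Finset.sum_range_succ, Finset.sum_range_one] at hj
    norm_num at hj
    rw [hLG0, hLG1, hLv1, hdGv1, ← hu_def] at hj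
    simp only [sgn, Bool.and_self, Bool.false_and, Bool.false_eq_true, if_false, one_smul, map_smul,
      LinearMap.smul_apply, Pi.smul_apply] at hj
    rw [show S.B G v 0 = u from hu_def.symm] at hj
    linear_combination (norm := module) hj
  have hLu2 : S.B L u 2 = (c₁/2) • S.one := by
    have hj := hjac false true L G v hLp hG 2 0
    simp only [LCAData.JacEq] at hj
    rw [Finset.sum_range_succ, Finset.sum_range_succ, Finset.sum_range_one] at hj
    norm_num at hj
    rw [hLG0, hLG1, hLGp 2 le_rfl, hLvp 2 le_rfl, hdGv2, ← hu_def] at hj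
    simp only [sgn, Bool.false_and, Bool.false_eq_true, if_false, one_smul, map_smul, map_zero,
      LinearMap.smul_apply, LinearMap.zero_apply, Pi.smul_apply, Pi.zero_apply,
      smul_zero, add_zero, zero_add] at hj
    rw [hGv1] at hj
    linear_combination (norm := module) hj
  have hLup : ∀ m, 3 ≤ m → S.B L u m = 0 := by
    intro m hm; obtain ⟨k, rfl⟩ : ∃ k, m = k + 3 := ⟨m - 3, by omega⟩
    have hj := hjac false true L G v hLp hG (k+3) 0
    simp only [LCAData.JacEq] at hj
    rw [Finset.sum_eq_zero] at hj
    · rw [hLvp (k+3) (by omega)] at hj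
      simpa [sgn, ← hu_def] using hj
    · intro j hj'
      rcases Nat.lt_or_ge j 2 with h2 | h2
      · interval_cases j
        · rw [hLG0]
          simp [hdGvp (k+3) (by omega)]
        · rw [hLG1, show k + 3 - 1 + 0 = k + 2 from by omega]
          simp [map_smul, LinearMap.smul_apply, Pi.smul_apply, hGv2 (k+2) (by omega)]
      · rw [hLGp j h2]; simp
  -- B u L via skew symmetry (both even)
  have hskLu := hskew false false L u 3 hLp hup hLup
  have hIcc03 : Finset.Icc (0:ℕ) 3 = {0,1,2,3} := by decide
  have hIcc13 : Finset.Icc (1:ℕ) 3 = {1,2,3} := by decide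
  have hIcc23 : Finset.Icc (2:ℕ) 3 = {2,3} := by decide
  have huL0 : S.B u L 0 = 0 := by
    have h := hskLu 0
    rw [hIcc03, Finset.sum_insert (by decide), Finset.sum_insert (by decide),
      Finset.sum_insert (by decide), Finset.sum_singleton] at h
    rw [hLu0, hLu1, hLu2, hLup 3 le_rfl] at h
    norm_num [sgn, pow_succ, map_smul, hd1] at h
    linear_combination (norm := module) h
  have huL1 : S.B u L 1 = u := by
    have h := hskLu 1
    rw [hIcc13, Finset.sum_insert (by decide), Finset.sum_insert (by decide),
      Finset.sum_singleton] at h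
    rw [hLu1, hLu2, hLup 3 le_rfl] at h
    norm_num [sgn, pow_succ, map_smul, hd1] at h
    linear_combination (norm := module) h
  have huL2 : S.B u L 2 = -((c₁/2) • S.one) := by
    have h := hskLu 2
    rw [hIcc23, Finset.sum_insert (by decide), Finset.sum_singleton] at h
    rw [hLu2, hLup 3 le_rfl] at h
    norm_num [sgn, pow_succ, map_smul, hd1] at h
    linear_combination (norm := module) h
  have huLp : ∀ m, 3 ≤ m → S.B u L m = 0 := by
    intro m hm
    have h := hskLu m
    rw [Finset.sum_eq_zero, smul_zero] at h
    · exact h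
    · intro i hi
      rw [hLup i (le_trans hm (Finset.mem_Icc.mp hi).1), map_zero, smul_zero]
  -- B u u via Jacobi (a = G, b = v, c = u)
  have huu : ∀ n, S.B u u n = S.B v (S.der v) n := by
    intro n
    have hj := hjac true true G v u hG hv 0 n
    simp only [LCAData.JacEq] at hj
    rw [Finset.sum_range_one, hBvu n, hGu0, ← hu_def] at hj
    simp only [sgn, Bool.and_self, if_true, Nat.sub_zero, Nat.zero_add, zero_add,
      Nat.choose_zero_right, Nat.cast_one, one_smul, neg_smul, map_zero,
      LinearMap.zero_apply, Pi.zero_apply, smul_zero] at hj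
    linear_combination (norm := module) -hj
  have huu0 : S.B u u 0 = 0 := by rw [huu 0, hvdv0]
  have huu1 : S.B u u 1 = c₂ • S.one := by rw [huu 1, hvdv1]
  have huup : ∀ m, 2 ≤ m → S.B u u m = 0 := by
    intro m hm; rw [huu m, hvdvp m hm]
  -- B u (der u)
  have hudu0 : S.B u (S.der u) 0 = 0 := by
    have h := (hs2 u u).1; rw [huu0] at h; simpa using h
  have hudu1 : S.B u (S.der u) 1 = 0 := by
    have h := (hs2 u u).2 0
    simpa [huu0, huu1, hd1] using h
  have hudu2 : S.B u (S.der u) 2 = c₂ • S.one := by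
    have h := (hs2 u u).2 1
    simpa [huu1, huup 2 le_rfl] using h
  have hudup : ∀ m, 3 ≤ m → S.B u (S.der u) m = 0 := by
    intro m hm; obtain ⟨k, rfl⟩ : ∃ k, m = k + 3 := ⟨m - 3, by omega⟩
    have h := (hs2 u u).2 (k+2)
    simpa [huup (k+3) (by omega), huup (k+2) (by omega), show k+2+1 = k+3 from rfl] using h
  -- B (der u) (der u)
  have hdudu0 : S.B (S.der u) (S.der u) 0 = 0 := (hs1 u (S.der u)).1
  have hdudu1 : S.B (S.der u) (S.der u) 1 = 0 := by
    have h := (hs1 u (S.der u)).2 0; rw [hudu0] at h; simpa using h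
  have hdudu2 : S.B (S.der u) (S.der u) 2 = 0 := by
    have h := (hs1 u (S.der u)).2 1; rw [hudu1] at h; simpa using h
  have hdudu3 : S.B (S.der u) (S.der u) 3 = -(c₂ • S.one) := by
    have h := (hs1 u (S.der u)).2 2; rw [hudu2] at h; exact h
  have hdudup : ∀ m, 4 ≤ m → S.B (S.der u) (S.der u) m = 0 := by
    intro m hm; obtain ⟨k, rfl⟩ : ∃ k, m = k + 4 := ⟨m - 4, by omega⟩
    have h := (hs1 u (S.der u)).2 (k+3); rw [hudup (k+3) (by omega)] at h; simpa using h
  -- B L (der u)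
  have hLdu0 : S.B L (S.der u) 0 = S.der (S.der u) := by
    have h := (hs2 L u).1; rw [hLu0] at h; exact h
  have hLdu1 : S.B L (S.der u) 1 = (2:ℂ) • S.der u := by
    have h := (hs2 L u).2 0
    rw [show (0:ℕ)+1 = 1 from rfl, hLu1, hLu0] at h
    rw [h]; module
  have hLdu2 : S.B L (S.der u) 2 = u := by
    have h := (hs2 L u).2 1
    simpa [hLu2, hLu1, hd1] using h
  have hLdu3 : S.B L (S.der u) 3 = (c₁/2) • S.one := by
    have h := (hs2 L u).2 2
    simpa [hLup 3 le_rfl, hLu2] using h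
  have hLdup : ∀ m, 4 ≤ m → S.B L (S.der u) m = 0 := by
    intro m hm; obtain ⟨k, rfl⟩ : ∃ k, m = k + 4 := ⟨m - 4, by omega⟩
    have h := (hs2 L u).2 (k+3)
    simpa [hLup (k+4) (by omega), hLup (k+3) (by omega), show k+3+1 = k+4 from rfl] using h
  -- B (der u) L
  have hduL0 : S.B (S.der u) L 0 = 0 := (hs1 u L).1
  have hduL1 : S.B (S.der u) L 1 = 0 := by
    have h := (hs1 u L).2 0; rw [huL0] at h; simpa using h
  have hduL2 : S.B (S.der u) L 2 = -u := by
    have h := (hs1 u L).2 1; rw [huL1] at h; exact h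
  have hduL3 : S.B (S.der u) L 3 = (c₁/2) • S.one := by
    have h := (hs1 u L).2 2; rw [huL2] at h; simpa using h
  have hduLp : ∀ m, 4 ≤ m → S.B (S.der u) L m = 0 := by
    intro m hm; obtain ⟨k, rfl⟩ : ∃ k, m = k + 4 := ⟨m - 4, by omega⟩
    have h := (hs1 u L).2 (k+3); rw [huLp (k+3) (by omega)] at h; simpa using h
  -- B (der u) G
  have hduG0 : S.B (S.der u) G 0 = 0 := (hs1 u G).1
  have hduG1 : S.B (S.der u) G 1 = 0 := by
    have h := (hs1 u G).2 0; rw [huG0] at h; simpa using h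
  have hduG2 : S.B (S.der u) G 2 = -v := by
    have h := (hs1 u G).2 1; rw [huG1] at h; exact h
  have hduGp : ∀ m, 3 ≤ m → S.B (S.der u) G m = 0 := by
    intro m hm; obtain ⟨k, rfl⟩ : ∃ k, m = k + 3 := ⟨m - 3, by omega⟩
    have h := (hs1 u G).2 (k+2); rw [huGp (k+2) (by omega)] at h; simpa using h
  -- B L (der v)
  have hLdv0 : S.B L (S.der v) 0 = S.der (S.der v) := by
    have h := (hs2 L v).1; rw [hLv0] at h; exact h
  have hLdv1 : S.B L (S.der v) 1 = (3/2 : ℂ) • S.der v := by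
    have h := (hs2 L v).2 0
    rw [show (0:ℕ)+1 = 1 from rfl, hLv1, hLv0] at h
    rw [h, map_smul]; module
  have hLdv2 : S.B L (S.der v) 2 = (1/2 : ℂ) • v := by
    have h := (hs2 L v).2 1
    simpa [hLvp 2 le_rfl, hLv1] using h
  have hLdvp : ∀ m, 3 ≤ m → S.B L (S.der v) m = 0 := by
    intro m hm; obtain ⟨k, rfl⟩ : ∃ k, m = k + 3 := ⟨m - 3, by omega⟩
    have h := (hs2 L v).2 (k+2)
    simpa [hLvp (k+3) (by omega), hLvp (k+2) (by omega), show k+2+1 = k+3 from rfl] using h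
  -- expansion lemmas for the shifted conformal vector
  have hBexp2 : ∀ m, S.B (L + (1/2:ℂ) • S.der u) (L + (1/2:ℂ) • S.der u) m
      = S.B L L m + (1/2:ℂ) • S.B L (S.der u) m + (1/2:ℂ) • S.B (S.der u) L m
        + (1/2:ℂ) • ((1/2:ℂ) • S.B (S.der u) (S.der u) m) := by
    intro m
    simp only [map_add, map_smul, LinearMap.add_apply, LinearMap.smul_apply, Pi.add_apply,
      Pi.smul_apply, smul_add]
    abel
  have hBexpLG : ∀ m, S.B (L + (1/2:ℂ) • S.der u) (G + S.der v) m
      = S.B L G m + S.B L (S.der v) m + (1/2:ℂ) • S.B (S.der u) G m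
        + (1/2:ℂ) • S.B (S.der u) (S.der v) m := by
    intro m
    simp only [map_add, map_smul, LinearMap.add_apply, LinearMap.smul_apply, Pi.add_apply,
      Pi.smul_apply, smul_add]
    abel
  have hL'L'0 : S.B (L + (1/2:ℂ) • S.der u) (L + (1/2:ℂ) • S.der u) 0
      = S.der (L + (1/2:ℂ) • S.der u) := by
    rw [hBexp2 0, hLL0, hLdu0, hduL0, hdudu0, map_add, map_smul]
    module
  have hL'L'1 : S.B (L + (1/2:ℂ) • S.der u) (L + (1/2:ℂ) • S.der u) 1
      = (2:ℂ) • (L + (1/2:ℂ) • S.der u) := by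
    rw [hBexp2 1, hLL1, hLdu1, hduL1, hdudu1]
    module
  have hL'L'2 : S.B (L + (1/2:ℂ) • S.der u) (L + (1/2:ℂ) • S.der u) 2 = 0 := by
    rw [hBexp2 2, hLL2, hLdu2, hduL2, hdudu2]
    module
  have hL'L'3 : S.B (L + (1/2:ℂ) • S.der u) (L + (1/2:ℂ) • S.der u) 3
      = ((c + 6 * c₁ - 3 * c₂) / 12) • S.one := by
    rw [hBexp2 3, hLL3, hLdu3, hduL3, hdudu3]
    module
  have hL'L'p : ∀ m, 4 ≤ m → S.B (L + (1/2:ℂ) • S.der u) (L + (1/2:ℂ) • S.der u) m = 0 := by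
    intro m hm
    rw [hBexp2 m, hLLp m hm, hLdup m hm, hduLp m hm, hdudup m hm]
    simp
  have hL'G'0 : S.B (L + (1/2:ℂ) • S.der u) (G + S.der v) 0 = S.der (G + S.der v) := by
    rw [hBexpLG 0, hLG0, hLdv0, hduG0, hdudv 0, map_add]
    module
  have hL'G'1 : S.B (L + (1/2:ℂ) • S.der u) (G + S.der v) 1 = (3/2:ℂ) • (G + S.der v) := by
    rw [hBexpLG 1, hLG1, hLdv1, hduG1, hdudv 1]
    module
  have hL'G'2 : S.B (L + (1/2:ℂ) • S.der u) (G + S.der v) 2 = 0 := by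
    rw [hBexpLG 2, hLGp 2 le_rfl, hLdv2, hduG2, hdudv 2]
    module
  have hL'G'p : ∀ m, 3 ≤ m → S.B (L + (1/2:ℂ) • S.der u) (G + S.der v) m = 0 := by
    intro m hm
    rw [hBexpLG m, hLGp m (by omega), hLdvp m hm, hduGp m hm, hdudv m]
    simp
  have hL'0 : ∀ x, S.B (L + (1/2:ℂ) • S.der u) x 0 = S.der x := by
    intro x
    simp only [map_add, map_smul, LinearMap.add_apply, LinearMap.smul_apply, Pi.add_apply,
      Pi.smul_apply]
    rw [hL0 x, (hs1 u x).1]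
    simp
  -- diagonalizability
  have hop : S.opAt (L + (1/2:ℂ) • S.der u) 1 = S.opAt L 1 + (-(1/2):ℂ) • S.opAt u 0 := by
    refine LinearMap.ext fun x => ?_
    have hdux : S.B (S.der u) x 1 = -S.B u x 0 := by simpa using (hs1 u x).2 0
    simp only [VAData.opAt, LinearMap.coe_comp, Function.comp_apply, LinearMap.proj_apply,
      LinearMap.add_apply, LinearMap.smul_apply, map_add, map_smul, Pi.add_apply,
      Pi.smul_apply, hdux]
    module
  have hcomm : Commute (S.opAt L 1) (S.opAt u 0) := by
    refine LinearMap.ext fun x => ?_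
    have hj := hjac false false L u x hLp hup 1 0
    simp only [LCAData.JacEq] at hj
    rw [Finset.sum_range_succ, Finset.sum_range_one] at hj
    norm_num at hj
    rw [hLu0, hLu1] at hj
    have hdux : S.B (S.der u) x 1 = -S.B u x 0 := by simpa using (hs1 u x).2 0
    rw [hdux] at hj
    simp only [sgn, Bool.and_self, Bool.false_and, Bool.false_eq_true, if_false, one_smul] at hj
    simp only [VAData.opAt, Module.End.mul_apply, LinearMap.coe_comp, Function.comp_apply,
      LinearMap.proj_apply]
    linear_combination (norm := module) hj
  have hcomm2 : Commute (S.opAt L 1) ((-(1/2):ℂ) • S.opAt u 0) := hcomm.smul_right _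
  have hdiagL' : IsDiag (S.opAt (L + (1/2:ℂ) • S.der u) 1) := by
    rw [hop]
    exact isDiag_add_of_commute' hcomm2 hLdiag (isDiag_smul' _ hdiag)
  -- final assembly
  refine ⟨⟨Submodule.add_mem _ hG hdvp, hG'G'1, hG'G'2, hG'G'p, ?_, ?_, ?_, ?_⟩, hL'⟩
  · rw [hL']
    funext m
    rcases m with _ | _ | _ | _ | m
    · exact hL'L'0
    · exact hL'L'1
    · exact hL'L'2
    · exact hL'L'3
    · exact hL'L'p (m+4) (by omega)
  · rw [hL']
    funext m
    rcases m with _ | _ | m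
    · exact hL'G'0
    · exact hL'G'1
    · rcases m with _ | m
      · exact hL'G'2
      · exact hL'G'p (m+3) (by omega)
  · rw [hL']
    exact hL'0
  · rw [hL']
    exact hdiagL'
end
end

section
/- Let R = ℂ[∂]⊗span{u_i}_{i∈I} ⊕ E_C be a Lie conformal algebra with central part E_C (∂E_C = 0). Let R̄ be the parity-reversed ℂ[∂]-module with generators ū_i and central part Ē_C, and define on R̃ = R ⊕ R̄ the λ-brackets [ū_i _λ u_j] := overline([u_i _λ u_j]), [u_i _λ ū_j] := (-1)^{p(u_i)} overline([u_i _λ u_j]), [ū_i _λ ū_j] := 0, and [C _λ R̃] = [C̄ _λ R̃] = 0. Then R̃ is a Lie conformal algebra (i.e. the λ-bracket satisfies sesquilinearity, skew-symmetry, and the Jacobi identity). -/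
open scoped BigOperators
noncomputable section

open VAx VAx.LCAData

variable {V : Type*} [AddCommGroup V] [Module ℂ V]

/-- The Lie conformal algebra `R̃ = R ⊕ R̄` of Theorem 5.4: the underlying space is `R × R`
(second factor the parity-reversed copy `R̄`, `x̄ := (0,x)`), with
`[ū_λ u] = overline([u'_λ u])`, `[u_λ ū] = (-1)^{p(u)} overline([u_λ u'])`, `[ū_λ ū'] = 0`.
Here `σ` is the parity involution of `R` (`σ = id` on the even part, `σ = -id` on the odd
part), which implements the sign `(-1)^{p(u)}`. -/
def barProd (S : VAx.LCAData V) (σ : V →ₗ[ℂ] V) : VAx.LCAData (V × V) where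
  part := fun p => (S.part p).prod (S.part (!p))
  der := S.der.prodMap S.der
  B := LinearMap.mk₂ ℂ
    (fun x y => fun m => (S.B x.1 y.1 m, S.B x.2 y.1 m + S.B (σ x.1) y.2 m))
    (by
      intro a b y; funext m
      simp [map_add, LinearMap.add_apply, Pi.add_apply, Prod.ext_iff]
      abel)
    (by
      intro c a y; funext m
      simp [map_smul, LinearMap.smul_apply, Pi.smul_apply, Prod.ext_iff, smul_add])
    (by
      intro a y z; funext m
      simp [map_add, LinearMap.add_apply, Pi.add_apply, Prod.ext_iff]
      abel)
    (by
      intro c a y; funext m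
      simp [map_smul, LinearMap.smul_apply, Pi.smul_apply, Prod.ext_iff, smul_add])


section Helpers

lemma psgn_sq (p : Bool) : psgn p * psgn p = 1 := by cases p <;> norm_num [psgn]

lemma sgn_not_right (p q : Bool) : sgn p (!q) = sgn p q * psgn p := by
  cases p <;> cases q <;> norm_num [sgn, psgn]

lemma sgn_not_left (p q : Bool) : sgn (!p) q = sgn p q * psgn q := by
  cases p <;> cases q <;> norm_num [sgn, psgn]

lemma psgn_xor (p q : Bool) : psgn (xor p q) = psgn p * psgn q := by
  cases p <;> cases q <;> norm_num [psgn]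

lemma barProd_B_apply (S : VAx.LCAData V) (σ : V →ₗ[ℂ] V) (x y : V × V) (m : ℕ) :
    (barProd S σ).B x y m = (S.B x.1 y.1 m, S.B x.2 y.1 m + S.B (σ x.1) y.2 m) := rfl

lemma barProd_der_apply (S : VAx.LCAData V) (σ : V →ₗ[ℂ] V) (x : V × V) :
    (barProd S σ).der x = (S.der x.1, S.der x.2) := rfl

lemma barProd_der_fst (S : VAx.LCAData V) (σ : V →ₗ[ℂ] V) (x : V × V) :
    ((barProd S σ).der x).1 = S.der x.1 := rfl

lemma barProd_der_snd (S : VAx.LCAData V) (σ : V →ₗ[ℂ] V) (x : V × V) :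
    ((barProd S σ).der x).2 = S.der x.2 := rfl

lemma prodMap_pow_apply (f : V →ₗ[ℂ] V) (n : ℕ) (x : V × V) :
    ((f.prodMap f) ^ n) x = ((f ^ n) x.1, (f ^ n) x.2) := by
  induction n generalizing x with
  | zero => simp
  | succ n ih =>
      simp only [pow_succ, Module.End.mul_apply, LinearMap.prodMap_apply, ih]

lemma sum_split2 (s : Finset ℕ) (g : ℕ → ℂ) (e : ℂ) (A B : ℕ → V) :
    ∑ m ∈ s, g m • (A m + e • B m)
      = (∑ m ∈ s, g m • A m) + e • ∑ m ∈ s, g m • B m := by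
  rw [Finset.smul_sum, ← Finset.sum_add_distrib]
  refine Finset.sum_congr rfl fun m _ => ?_
  rw [smul_add, smul_smul, smul_smul, mul_comm]

lemma sum_split3 (s : Finset ℕ) (g : ℕ → ℂ) (e f : ℂ) (A B C : ℕ → V) :
    ∑ m ∈ s, g m • (A m + e • B m + f • C m)
      = (∑ m ∈ s, g m • A m) + e • (∑ m ∈ s, g m • B m) + f • ∑ m ∈ s, g m • C m := by
  rw [Finset.smul_sum, Finset.smul_sum, ← Finset.sum_add_distrib, ← Finset.sum_add_distrib]
  refine Finset.sum_congr rfl fun m _ => ?_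
  rw [smul_add, smul_add, smul_smul, smul_smul, smul_smul, smul_smul,
    mul_comm e, mul_comm f]

end Helpers

/-- Let `R = ℂ[∂]⊗span{u_i} ⊕ E_C` be a Lie conformal algebra with central part
`E_C` (`∂E_C = 0`, `[E_C _λ R] = 0`). Then `R̃ = R ⊕ R̄` with the λ-brackets
`[ū_λ u] = overline([u'_λ u])`, `[u_λ ū] = (-1)^{p(u)} overline([u_λ u'])`, `[ū_λ ū'] = 0`
(and `[C_λ R̃] = [C̄_λ R̃] = 0`) is again a Lie conformal algebra: the bracket satisfies
sesquilinearity, skew-symmetry and the Jacobi identity. -/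
theorem stmt_6 (S : VAx.LCAData V) (hS : S.IsLCA)
    (σ : V →ₗ[ℂ] V)
    (hσe : ∀ a ∈ S.part false, σ a = a) (hσo : ∀ a ∈ S.part true, σ a = -a)
    (hspan : S.part false ⊔ S.part true = ⊤)
    (Z : Submodule ℂ V)
    (hZ : ∀ z ∈ Z, S.der z = 0 ∧ ∀ x m, S.B z x m = 0 ∧ S.B x z m = 0) :
    (barProd S σ).IsLCA := by
  have hσ : ∀ (p : Bool) a, a ∈ S.part p → σ a = psgn p • a := by
    intro p a ha
    cases p
    · simp [psgn, hσe a ha]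
    · simp [psgn, hσo a ha]
  have hσmem : ∀ (p : Bool) a, a ∈ S.part p → σ a ∈ S.part p := by
    intro p a ha; rw [hσ p a ha]; exact Submodule.smul_mem _ _ ha
  have hσd : ∀ x, σ (S.der x) = S.der (σ x) := by
    intro x
    have hx : x ∈ S.part false ⊔ S.part true := by rw [hspan]; exact Submodule.mem_top
    obtain ⟨e, he, o, ho, rfl⟩ := Submodule.mem_sup.mp hx
    have hde := hS.hom_der false e he
    have hdo := hS.hom_der true o ho
    simp only [map_add, hσe _ he, hσo _ ho, hσe _ hde, hσo _ hdo, map_neg]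
  constructor
  · -- hom_der
    intro p x hx
    obtain ⟨hx1, hx2⟩ := Submodule.mem_prod.mp hx
    exact Submodule.mem_prod.mpr ⟨hS.hom_der _ _ hx1, hS.hom_der _ _ hx2⟩
  · -- hom_B
    intro p q x y hx hy m
    obtain ⟨hx1, hx2⟩ := Submodule.mem_prod.mp hx
    obtain ⟨hy1, hy2⟩ := Submodule.mem_prod.mp hy
    refine Submodule.mem_prod.mpr ⟨hS.hom_B p q _ _ hx1 hy1 m, ?_⟩
    refine Submodule.add_mem _ ?_ ?_
    · have h := hS.hom_B (!p) q x.2 y.1 hx2 hy1 m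
      have hb : xor (!p) q = !(xor p q) := by cases p <;> cases q <;> rfl
      rwa [hb] at h
    · have h := hS.hom_B p (!q) (σ x.1) y.2 (hσmem p x.1 hx1) hy2 m
      have hb : xor p (!q) = !(xor p q) := by cases p <;> cases q <;> rfl
      rwa [hb] at h
  · -- sesq1
    intro x y
    constructor
    · rw [Prod.ext_iff]
      simp only [barProd_B_apply, barProd_der_fst, barProd_der_snd, Prod.fst_zero,
        Prod.snd_zero]
      refine ⟨(hS.sesq1 x.1 y.1).1, ?_⟩
      rw [hσd x.1, (hS.sesq1 x.2 y.1).1, (hS.sesq1 (σ x.1) y.2).1, add_zero]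
    · intro m
      rw [Prod.ext_iff]
      simp only [barProd_B_apply, barProd_der_fst, barProd_der_snd, Prod.fst_neg,
        Prod.snd_neg]
      refine ⟨(hS.sesq1 x.1 y.1).2 m, ?_⟩
      rw [hσd x.1, (hS.sesq1 x.2 y.1).2 m, (hS.sesq1 (σ x.1) y.2).2 m, neg_add]
  · -- sesq2
    intro x y
    constructor
    · rw [Prod.ext_iff]
      simp only [barProd_B_apply, barProd_der_fst, barProd_der_snd]
      refine ⟨(hS.sesq2 x.1 y.1).1, ?_⟩
      rw [(hS.sesq2 x.2 y.1).1, (hS.sesq2 (σ x.1) y.2).1, map_add]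
    · intro m
      rw [Prod.ext_iff]
      simp only [barProd_B_apply, barProd_der_fst, barProd_der_snd, Prod.fst_add,
        Prod.snd_add]
      refine ⟨(hS.sesq2 x.1 y.1).2 m, ?_⟩
      rw [(hS.sesq2 x.2 y.1).2 m, (hS.sesq2 (σ x.1) y.2).2 m, map_add]
      abel
  · -- bfin
    intro x y
    obtain ⟨N1, h1⟩ := hS.bfin x.1 y.1
    obtain ⟨N2, h2⟩ := hS.bfin x.2 y.1
    obtain ⟨N3, h3⟩ := hS.bfin (σ x.1) y.2
    refine ⟨max N1 (max N2 N3), fun m hm => ?_⟩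
    rw [Prod.ext_iff]
    simp only [barProd_B_apply, Prod.fst_zero, Prod.snd_zero]
    refine ⟨h1 m (le_trans (le_max_left _ _) hm), ?_⟩
    rw [h2 m (le_trans (le_trans (le_max_left _ _) (le_max_right _ _)) hm),
      h3 m (le_trans (le_trans (le_max_right _ _) (le_max_right _ _)) hm), add_zero]
  · -- skew
    intro p q x y N hx hy h0
    obtain ⟨hx1, hx2⟩ := Submodule.mem_prod.mp hx
    obtain ⟨hy1, hy2⟩ := Submodule.mem_prod.mp hy
    have hab : ∀ m, N ≤ m → S.B x.1 y.1 m = 0 := fun m hm => congrArg Prod.fst (h0 m hm)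
    have hmix : ∀ m, N ≤ m → S.B x.2 y.1 m + psgn p • S.B x.1 y.2 m = 0 := by
      intro m hm
      have h : S.B x.2 y.1 m + S.B (σ x.1) y.2 m = 0 := congrArg Prod.snd (h0 m hm)
      rwa [hσ p x.1 hx1, map_smul, LinearMap.smul_apply, Pi.smul_apply] at h
    obtain ⟨N1, hN1⟩ := hS.bfin x.1 y.2
    obtain ⟨N2, hN2⟩ := hS.bfin x.2 y.1
    set N' := max N (max N1 N2) with hN'def
    have hNle : N ≤ N' := le_max_left _ _
    have h1 := hS.skew p q x.1 y.1 N hx1 hy1 hab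
    have h2 := hS.skew p (!q) x.1 y.2 N' hx1 hy2
      (fun m hm => hN1 m (le_trans (le_trans (le_max_left _ _) (le_max_right _ _)) hm))
    have h3 := hS.skew (!p) q x.2 y.1 N' hx2 hy1
      (fun m hm => hN2 m (le_trans (le_trans (le_max_right _ _) (le_max_right _ _)) hm))
    intro k
    have hsplit : ((- sgn p q) •
        ∑ m ∈ Finset.Icc k N, (((-1 : ℂ)) ^ m * (m.choose k : ℂ)) •
          (((barProd S σ).der ^ (m - k)) ((barProd S σ).B x y m)) : V × V)
      = ((- sgn p q) • ∑ m ∈ Finset.Icc k N, (((-1 : ℂ)) ^ m * (m.choose k : ℂ)) •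
          ((S.der ^ (m - k)) (S.B x.1 y.1 m)),
         (- sgn p q) • ∑ m ∈ Finset.Icc k N, (((-1 : ℂ)) ^ m * (m.choose k : ℂ)) •
          ((S.der ^ (m - k)) (S.B x.2 y.1 m + S.B (σ x.1) y.2 m))) := by
      rw [Prod.ext_iff]
      constructor
      · rw [Prod.smul_fst, Prod.fst_sum]
        congr 1
        refine Finset.sum_congr rfl fun m _ => ?_
        rw [Prod.smul_fst]
        congr 1
        show (((S.der.prodMap S.der) ^ (m - k)) ((barProd S σ).B x y m)).1 = _
        rw [prodMap_pow_apply, barProd_B_apply]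
      · rw [Prod.smul_snd, Prod.snd_sum]
        congr 1
        refine Finset.sum_congr rfl fun m _ => ?_
        rw [Prod.smul_snd]
        congr 1
        show (((S.der.prodMap S.der) ^ (m - k)) ((barProd S σ).B x y m)).2 = _
        rw [prodMap_pow_apply, barProd_B_apply]
    rw [hsplit, Prod.ext_iff]
    constructor
    · exact h1 k
    · show S.B y.2 x.1 k + S.B (σ y.1) x.2 k = _
      rw [hσ q y.1 hy1, map_smul, LinearMap.smul_apply, Pi.smul_apply, h2 k, h3 k]
      have hext : ∑ m ∈ Finset.Icc k N, (((-1 : ℂ)) ^ m * (m.choose k : ℂ)) •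
            ((S.der ^ (m - k)) (S.B x.2 y.1 m + S.B (σ x.1) y.2 m))
          = ∑ m ∈ Finset.Icc k N', (((-1 : ℂ)) ^ m * (m.choose k : ℂ)) •
            ((S.der ^ (m - k)) (S.B x.2 y.1 m + S.B (σ x.1) y.2 m)) := by
        refine Finset.sum_subset (Finset.Icc_subset_Icc_right hNle) fun m hm hnm => ?_
        have hk : k ≤ m := (Finset.mem_Icc.mp hm).1
        have hNm : N ≤ m := by
          by_contra hc
          exact hnm (Finset.mem_Icc.mpr ⟨hk, le_of_not_ge hc⟩)
        rw [hσ p x.1 hx1, map_smul, LinearMap.smul_apply, Pi.smul_apply, hmix m hNm,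
          map_zero, smul_zero]
      rw [hext]
      have hrw : ∀ mm : ℕ, (((-1 : ℂ)) ^ mm * (mm.choose k : ℂ)) •
            ((S.der ^ (mm - k)) (S.B x.2 y.1 mm + S.B (σ x.1) y.2 mm))
          = (((-1 : ℂ)) ^ mm * (mm.choose k : ℂ)) •
            ((S.der ^ (mm - k)) (S.B x.2 y.1 mm)
              + psgn p • (S.der ^ (mm - k)) (S.B x.1 y.2 mm)) := by
        intro mm
        rw [hσ p x.1 hx1, map_smul, LinearMap.smul_apply, Pi.smul_apply, map_add, map_smul]
      rw [Finset.sum_congr rfl (fun mm _ => hrw mm), sum_split2, smul_add, smul_smul,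
        smul_smul, sgn_not_right, sgn_not_left, add_comm]
      congr 2 <;> cases p <;> cases q <;> norm_num [sgn, psgn]
  · -- jacobi
    intro p q x y z hx hy m n
    obtain ⟨hx1, hx2⟩ := Submodule.mem_prod.mp hx
    obtain ⟨hy1, hy2⟩ := Submodule.mem_prod.mp hy
    have hσx := hσ p x.1 hx1
    have hσy := hσ q y.1 hy1
    have hσB : ∀ j, σ (S.B x.1 y.1 j) = psgn (xor p q) • S.B x.1 y.1 j :=
      fun j => hσ _ _ (hS.hom_B p q x.1 y.1 hx1 hy1 j)
    have J0 := hS.jacobi p q x.1 y.1 z.1 hx1 hy1 m n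
    have J1 := hS.jacobi (!p) q x.2 y.1 z.1 hx2 hy1 m n
    have J2 := hS.jacobi p (!q) x.1 y.2 z.1 hx1 hy2 m n
    have J3 := hS.jacobi p q x.1 y.1 z.2 hx1 hy1 m n
    unfold VAx.LCAData.JacEq at J0 J1 J2 J3 ⊢
    rw [Prod.ext_iff]
    constructor
    · simp only [barProd_B_apply, Prod.fst_add, Prod.smul_fst, Prod.fst_sum]
      exact J0
    · simp only [barProd_B_apply, Prod.snd_add, Prod.smul_snd, Prod.snd_sum, hσx, hσy, hσB]
      simp only [map_add, map_smul, LinearMap.add_apply, LinearMap.smul_apply,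
        Pi.add_apply, Pi.smul_apply, smul_add, smul_smul]
      rw [J1, J2, J3]
      have hcomm : ∀ (c e : ℂ) (v : V), (c * e) • v = e • (c • v) := fun c e v => by
        rw [mul_comm, mul_smul]
      simp only [hcomm, smul_add, Finset.sum_add_distrib]
      simp only [← Finset.smul_sum]
      cases p <;> cases q <;> simp [sgn, psgn, smul_smul] <;> abel
end
end

section
/- With R̃ = R ⊕ R̄ as above and the odd endomorphism D defined by D(ū_i) = u_i, D(u_i) = ∂ū_i, D(C̄) = C, D(C) = 0 (so [D,D] = 2∂), the pair ({ū_i}_{i∈I}, D) satisfies the supersymmetric extension formulas: (SEF1) [Dū_i _λ Dū_j] = (-1)^{p(ū_i)+1}(D[Dū_i _λ ū_j] + λ[ū_i _λ ū_j]) and (SEF2) [ū_i _λ Dū_j] = (-1)^{p(ū_i)+1}([Dū_i _λ ū_j] - D[ū_i _λ ū_j]). -/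
open scoped BigOperators
noncomputable section

open VAx VAx.LCAData

variable {V : Type*} [AddCommGroup V] [Module ℂ V]

/-- The odd endomorphism `D` of `R̃ = R ⊕ R̄` with `D(ū) = u` and `D(u) = ∂ū`
(so `D(x, x') = (x', ∂x)` and `[D,D] = 2∂`). -/
def barD (S : VAx.LCAData V) : Module.End ℂ (V × V) :=
  (LinearMap.snd ℂ V V).prod (S.der.comp (LinearMap.fst ℂ V V))

/-- With `R̃ = R ⊕ R̄` as in Theorem 5.4 and the odd endomorphism `D` defined by
`D(ū_i) = u_i`, `D(u_i) = ∂ū_i` (so `[D,D] = 2∂`), the pair `({ū_i}, D)` satisfies the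
supersymmetric extension formulas (SEF1) and (SEF2): for all homogeneous `a, b ∈ R`, the pair
`(ā, b̄) = ((0,a),(0,b))` satisfies
`[Dā_λ Db̄] = (-1)^{p(ā)+1}(D[Dā_λ b̄] + λ[ā_λ b̄])` and
`[ā_λ Db̄] = (-1)^{p(ā)+1}([Dā_λ b̄] - D[ā_λ b̄])`. -/
theorem stmt_7 (S : VAx.LCAData V) (hS : S.IsLCA)
    (σ : V →ₗ[ℂ] V)
    (hσe : ∀ a ∈ S.part false, σ a = a) (hσo : ∀ a ∈ S.part true, σ a = -a)
    (hspan : S.part false ⊔ S.part true = ⊤) :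
    ∀ (p : Bool) (a : V), a ∈ S.part p → ∀ (q : Bool) (b : V), b ∈ S.part q →
      (barProd S σ).SEF (barD S) (!p) ((0 : V), a) ((0 : V), b) := by
  intro p a ha q b hb
  have hσa : σ a = psgn p • a := by
    cases p with
    | false => simpa [psgn] using hσe a ha
    | true => simpa [psgn] using hσo a ha
  have hpp : psgn p * psgn p = 1 := by cases p <;> simp [psgn]
  constructor <;> intro m <;>
    simp [LCAData.SEF, barProd, barD, lam, hσa, Prod.ext_iff, smul_smul, hpp,
      LinearMap.mk₂_apply, Prod.smul_def] <;>
    cases m <;> simp [lam]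
end
end

section
/- Let SVir ⊕ Cur(g)_{N=1} be the ℂ[∂]-module where SVir = ℂ[∂]⊗(ℂL⊕ℂG)⊕ℂC carries the N=1 super-Virasoro λ-brackets and Cur(g)_{N=1} = ℂ[∂]⊗(g⊕ḡ) carries [a_λ b] = [a,b], [a_λ b̄] = (-1)^{p(a)} overline([a,b]), [ā_λ b̄] = 0, with cross brackets [L_λ a] = (∂+Δ_a λ)a, [L_λ ā] = (∂+(Δ_a - 1/2)λ)ā, [G_λ a] = (∂+(2Δ_a - 1)λ)ā, [G_λ ā] = a, where Δ_a = 1-ω for a ∈ g_ω in an Ω-graded Lie superalgebra g. Then this is a Lie conformal algebra; in particular the Jacobi identity [G_λ [a_γ b]] = [[G_λ a]_{λ+γ} b] + (-1)^{p(a)}[a_γ [G_λ b]] holds. -/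
open scoped BigOperators
noncomputable section

open VAx VAx.LCAData

/-- (Superconformal current algebra.) Let `g = ⊕_ω g_ω` be an `Ω`-graded Lie
superalgebra and `SVir ⊕ Cur(g)_{N=1}` the `ℂ[∂]`-module carrying the `N = 1` super-Virasoro
λ-brackets on `SVir = ℂ[∂](L, G) ⊕ ℂC` and, on `Cur(g)_{N=1} = ℂ[∂]⊗(g ⊕ ḡ)`,
`[a_λ b] = [a,b]`, `[a_λ b̄] = (-1)^{p(a)} overline([a,b])`, `[ā_λ b̄] = 0`, with cross
brackets `[L_λ a] = (∂+Δ_a λ)a`, `[L_λ ā] = (∂+(Δ_a-1/2)λ)ā`, `[G_λ a] = (∂+(2Δ_a-1)λ)ā`,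
`[G_λ ā] = a`, where `Δ_a = 1-ω` for `a ∈ g_ω` (so `Δ_{[a,b]} = Δ_a + Δ_b - 1`). Then this is
a Lie conformal algebra; in particular the Jacobi identity
`[G_λ [a_γ b]] = [[G_λ a]_{λ+γ} b] + (-1)^{p(a)}[a_γ [G_λ b]]` holds (coefficientwise). -/
theorem stmt_13 {V : Type*} [AddCommGroup V] [Module ℂ V]
    (S : VAx.LCAData V)
    (hsq1 : ∀ a b, S.B (S.der a) b 0 = 0 ∧ ∀ m, S.B (S.der a) b (m + 1) = - S.B a b m)
    (hsq2 : ∀ a b, S.B a (S.der b) 0 = S.der (S.B a b 0) ∧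
      ∀ m, S.B a (S.der b) (m + 1) = S.der (S.B a b (m + 1)) + S.B a b m)
    (bar : V →ₗ[ℂ] V) (hbarder : ∀ x, bar (S.der x) = S.der (bar x))
    (lb : V →ₗ[ℂ] V →ₗ[ℂ] V)
    (L G Cc : V) (hGp : G ∈ S.part true) (hLp : L ∈ S.part false)
    (hC : ∀ x m, S.B Cc x m = 0 ∧ S.B x Cc m = 0) (hdC : S.der Cc = 0)
    (hLL : S.B L L = fun m => match m with
      | 0 => S.der L | 1 => (2 : ℂ) • L | 3 => (1 / 12 : ℂ) • Cc | _ => 0)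
    (hLG : S.B L G = fun m => match m with
      | 0 => S.der G | 1 => (3 / 2 : ℂ) • G | _ => 0)
    (hGG : S.B G G = fun m => match m with
      | 0 => (2 : ℂ) • L | 2 => (1 / 3 : ℂ) • Cc | _ => 0) :
    ∀ (pa pb : Bool) (a b : V) (Δa Δb : ℂ), a ∈ S.part pa → b ∈ S.part pb →
      (S.B G a = fun m => match m with
        | 0 => S.der (bar a) | 1 => (2 * Δa - 1) • bar a | _ => 0) →
      (S.B G b = fun m => match m with
        | 0 => S.der (bar b) | 1 => (2 * Δb - 1) • bar b | _ => 0) →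
      (S.B G (bar a) = fun m => if m = 0 then a else 0) →
      (S.B G (bar b) = fun m => if m = 0 then b else 0) →
      (S.B a b = fun m => if m = 0 then lb a b else 0) →
      (S.B a (bar b) = fun m => if m = 0 then psgn pa • bar (lb a b) else 0) →
      (S.B (bar a) b = fun m => if m = 0 then bar (lb a b) else 0) →
      (S.B G (lb a b) = fun m => match m with
        | 0 => S.der (bar (lb a b))
        | 1 => (2 * (Δa + Δb - 1) - 1) • bar (lb a b)
        | _ => 0) →
      ∀ m n, S.B G (S.B a b n) m =
        (∑ j ∈ Finset.range (m + 1),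
          ((Nat.choose (m - j + n) (m - j) : ℂ)) • S.B (S.B G a j) b (m - j + n))
        + psgn pa • S.B a (S.B G b m) n := by
  intro pa pb a b Δa Δb hpa hpb hGa hGb hGba hGbb hab habb hbab hGlb m n
  have hpsq : psgn pa • (psgn pa • (bar (lb a b))) = bar (lb a b) := by
    cases pa <;> simp [psgn]
  have hpsqd : psgn pa • (psgn pa • (S.der (bar (lb a b)))) = S.der (bar (lb a b)) := by
    cases pa <;> simp [psgn]
  have hGa0 : S.B G a 0 = S.der (bar a) := congrFun hGa 0
  have hGa1 : S.B G a 1 = (2 * Δa - 1) • bar a := congrFun hGa 1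
  have hGak : ∀ k, S.B G a (k + 2) = 0 := fun k => congrFun hGa (k + 2)
  have hGb0 : S.B G b 0 = S.der (bar b) := congrFun hGb 0
  have hGb1 : S.B G b 1 = (2 * Δb - 1) • bar b := congrFun hGb 1
  have hGbk : ∀ k, S.B G b (k + 2) = 0 := fun k => congrFun hGb (k + 2)
  have hGlb0 : S.B G (lb a b) 0 = S.der (bar (lb a b)) := congrFun hGlb 0
  have hGlb1 : S.B G (lb a b) 1 = (2 * (Δa + Δb - 1) - 1) • bar (lb a b) := congrFun hGlb 1
  have hGlbk : ∀ k, S.B G (lb a b) (k + 2) = 0 := fun k => congrFun hGlb (k + 2)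
  have hbab' : ∀ k, S.B (bar a) b k = if k = 0 then bar (lb a b) else 0 := fun k => by
    rw [hbab]
  have habb' : ∀ k, S.B a (bar b) k = if k = 0 then psgn pa • bar (lb a b) else 0 :=
    fun k => by rw [habb]
  have hda : ∀ k, S.B (S.der (bar a)) b k = if k = 1 then -(bar (lb a b)) else 0 := by
    intro k
    match k with
    | 0 => simpa using (hsq1 (bar a) b).1
    | 1 => rw [(hsq1 (bar a) b).2 0, hbab' 0]; simp
    | (k + 2) => rw [(hsq1 (bar a) b).2 (k + 1), hbab' (k + 1)]; simp
  have hadb : ∀ k, S.B a (S.der (bar b)) k =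
      if k = 0 then psgn pa • S.der (bar (lb a b))
      else if k = 1 then psgn pa • bar (lb a b) else 0 := by
    intro k
    match k with
    | 0 => rw [(hsq2 a (bar b)).1, habb' 0]; simp [map_smul]
    | 1 => rw [(hsq2 a (bar b)).2 0, habb' 1, habb' 0]; simp
    | (k + 2) => rw [(hsq2 a (bar b)).2 (k + 1), habb' (k + 2), habb' (k + 1)]; simp
  have habn : ∀ k, S.B a b k = if k = 0 then lb a b else 0 := fun k => by rw [hab]
  -- second RHS term as a function of m, n
  have hsnd : ∀ m n, S.B a (S.B G b m) n =
      if m = 0 then S.B a (S.der (bar b)) n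
      else if m = 1 then if n = 0 then (2 * Δb - 1) • (psgn pa • bar (lb a b)) else 0
      else 0 := by
    intro m n
    match m with
    | 0 => rw [hGb0]; simp
    | 1 =>
      rw [hGb1, map_smul]
      simp only [LinearMap.smul_apply, Pi.smul_apply, habb' n]
      split <;> simp
    | (m + 2) => rw [hGbk m]; simp
  match m, n with
  | 0, 0 =>
    rw [habn 0, if_pos rfl, hGlb0, Finset.sum_range_one]
    rw [hGa0, hda 0, hsnd 0 0, hadb 0]
    simp [hpsqd]
  | 0, (n + 1) =>
    rw [habn (n + 1), Finset.sum_range_one]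
    simp only [Nat.add_one_ne_zero, if_false, map_zero, LinearMap.zero_apply, Pi.zero_apply]
    rw [hGa0, hda (0 - 0 + (n + 1)), hsnd 0 (n + 1), hadb (n + 1)]
    match n with
    | 0 => simp [hpsq]
    | (n + 1) => simp
  | 1, 0 =>
    rw [habn 0, if_pos rfl, hGlb1, Finset.sum_range_succ, Finset.sum_range_one]
    rw [hGa0, hGa1, hda (1 - 0 + 0), map_smul]
    simp only [LinearMap.smul_apply, Pi.smul_apply, hbab' (1 - 1 + 0)]
    rw [hsnd 1 0]
    simp only [Nat.one_ne_zero, if_false, if_pos rfl]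
    cases pa <;> · simp [psgn]; module
  | 1, (n + 1) =>
    rw [habn (n + 1), Finset.sum_range_succ, Finset.sum_range_one]
    simp only [Nat.add_one_ne_zero, if_false, map_zero, LinearMap.zero_apply, Pi.zero_apply]
    rw [hGa0, hGa1, hda (1 - 0 + (n + 1)), map_smul]
    simp only [LinearMap.smul_apply, Pi.smul_apply, hbab' (1 - 1 + (n + 1))]
    rw [hsnd 1 (n + 1)]
    simp
  | (m + 2), n =>
    rw [habn n]
    have hzero : ∀ j ∈ Finset.range (m + 2 + 1),
        ((Nat.choose (m + 2 - j + n) (m + 2 - j) : ℂ)) •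
          S.B (S.B G a j) b (m + 2 - j + n) = 0 := by
      intro j _
      match j with
      | 0 =>
        rw [hGa0, hda (m + 2 - 0 + n)]
        have h1 : m + 2 - 0 + n ≠ 1 := by omega
        rw [if_neg h1, smul_zero]
      | 1 =>
        rw [hGa1, map_smul]
        simp only [LinearMap.smul_apply, Pi.smul_apply, hbab' (m + 2 - 1 + n)]
        have h1 : m + 2 - 1 + n ≠ 0 := by omega
        rw [if_neg h1, smul_zero, smul_zero]
      | (j + 2) => rw [hGak j]; simp
    rw [Finset.sum_eq_zero hzero, hsnd (m + 2) n,
      if_neg (Nat.succ_ne_zero _), if_neg (by omega : m + 2 ≠ 1)]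
    rcases Nat.eq_zero_or_pos n with h | h
    · subst h; rw [if_pos rfl, hGlbk m]; simp
    · rw [if_neg (by omega : n ≠ 0)]; simp
end
end

section
/- Let R̃ = ℂ[∂]⊗(ℂL ⊕ ℂL̄) be a Lie conformal algebra with L even, L̄ odd, [L_λ L] = (∂+2λ)L, [L_λ L̄] = (∂+Δλ)L̄ for some Δ ∈ ℂ, and an odd endomorphism D with D(L̄) = L, [D,D] = 2∂, such that ({L̄}, D) satisfies (SEF1) and (SEF2). Then [L̄_λ L̄] = (2-Δ)L, and moreover the Jacobi identity [L_λ [L̄_γ L̄]] = [[L_λ L̄]_{λ+γ} L̄] + [L̄_γ [L_λ L̄]] forces Δ ∈ {3/2, 2}. -/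
open scoped BigOperators
noncomputable section

open VAx VAx.LCAData

/-- Let `R̃ = ℂ[∂]⊗(ℂL ⊕ ℂL̄)` be a Lie conformal algebra with `L` even, `L̄`
odd, `[L_λ L] = (∂+2λ)L`, `[L_λ L̄] = (∂+Δλ)L̄`, and an odd endomorphism `D` with `D(L̄) = L`,
`[D,D] = 2∂`, such that `({L̄}, D)` satisfies (SEF1) and (SEF2). Then `[L̄_λ L̄] = (2-Δ)L`,
and the Jacobi identity `[L_λ [L̄_γ L̄]] = [[L_λ L̄]_{λ+γ} L̄] + [L̄_γ [L_λ L̄]]` forces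
`Δ ∈ {3/2, 2}`. -/
theorem stmt_15 {V : Type*} [AddCommGroup V] [Module ℂ V]
    (S : VAx.LCAData V)
    (hsq1 : ∀ a b, S.B (S.der a) b 0 = 0 ∧ ∀ m, S.B (S.der a) b (m + 1) = - S.B a b m)
    (hsq2 : ∀ a b, S.B a (S.der b) 0 = S.der (S.B a b 0) ∧
      ∀ m, S.B a (S.der b) (m + 1) = S.der (S.B a b (m + 1)) + S.B a b m)
    (L Lb : V) (Δ : ℂ) (hLp : L ∈ S.part false) (hLbp : Lb ∈ S.part true)
    (hL0 : L ≠ 0)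
    (D : Module.End ℂ V) (hDLb : D Lb = L) (hDL : D L = S.der Lb)
    (hDD : ∀ x, D (D x) = S.der x)
    (hLL : S.B L L = fun m => match m with
      | 0 => S.der L | 1 => (2 : ℂ) • L | _ => 0)
    (hLLb : S.B L Lb = fun m => match m with
      | 0 => S.der Lb | 1 => Δ • Lb | _ => 0)
    (hsef : S.SEF D true Lb Lb)
    (hjac : ∀ m n, S.JacEq false true L Lb Lb m n) :
    (S.B Lb Lb = fun m => if m = 0 then (2 - Δ) • L else 0) ∧
    (Δ = 3 / 2 ∨ Δ = 2) := by


  -- SEF1 specialized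
  have key : ∀ m, S.B L L m = D (S.B L Lb m) + lam (S.B Lb Lb) m := by
    intro m
    have h := hsef.1 m
    rw [hDLb] at h
    simpa [psgn] using h
  have h0 : S.B Lb Lb 0 = (2 - Δ) • L := by
    have h := key 1
    rw [hLL, hLLb] at h
    simp only [lam, map_smul, hDLb] at h
    have : S.B Lb Lb 0 = (2:ℂ) • L - Δ • L := by rw [h]; abel
    rw [this, sub_smul]
  have hv : ∀ m, S.B Lb Lb (m + 1) = 0 := by
    intro m
    have h := key (m + 2)
    rw [hLL, hLLb] at h
    simp only [lam, map_zero] at h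
    -- h : 0 = 0 + S.B Lb Lb (m+1)  (after match reduction)
    simpa using h.symm
  have hfun : S.B Lb Lb = fun m => if m = 0 then (2 - Δ) • L else 0 := by
    funext m
    cases m with
    | zero => simpa using h0
    | succ k => simpa using hv k
  refine ⟨hfun, ?_⟩
  have hj := hjac 1 0
  simp only [LCAData.JacEq, sgn] at hj
  rw [Finset.sum_range_succ, Finset.sum_range_succ, Finset.sum_range_zero] at hj
  simp only [h0, hLLb, hLL, map_smul, Pi.smul_apply] at hj
  -- reduce matches and numerals
  norm_num at hj
  rw [(hsq1 Lb Lb).2 0, h0] at hj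
  have hz : ((2 - Δ) * (2 * Δ - 3)) • L = 0 := by
    linear_combination (norm := module) -hj
  rcases smul_eq_zero.mp hz with h | h
  · rcases mul_eq_zero.mp h with h | h
    · right; linear_combination -h
    · left; linear_combination h / 2
  · exact absurd h hL0
end
end

section
/- Let g be a Lie superalgebra with an even invariant supersymmetric bilinear form (·|·). Define on Cur̃(g) = ℂ[∂]⊗(g⊕ḡ)⊕ℂK the λ-brackets [a_λ b] = [a,b] + Kλ(a|b), [a_λ b̄] = (-1)^{p(a)} overline([a,b]), [b̄_λ a] determined by skew-symmetry, [ā_λ b̄] = (-1)^{p(a)}K(a|b), with K central and ∂K = 0. Then Cur̃(g) is a Lie conformal algebra, and with the odd derivation D defined by D(ā) = a, D(a) = ∂ā, D(K) = 0, the set ḡ is a supersymmetric generator in the D-direction (i.e. (SEF1) and (SEF2) hold for all pairs from ḡ). -/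
open scoped BigOperators
noncomputable section

open VAx VAx.LCAData

variable {V : Type*} [AddCommGroup V] [Module ℂ V]
variable {g : Type*} [AddCommGroup g] [Module ℂ g]

/-- The generators of `Cur̃(g) = ℂ[∂]⊗(g ⊕ ḡ) ⊕ ℂK` inside `V`, with their parities:
currents `a` (`a ∈ g` of parity `p`), barred currents `ā` (of parity `p(a)+1`), and `K`. -/
def CurGen (pg : Bool → Submodule ℂ g) (cur barv : g →ₗ[ℂ] V) (K : V)
    (x : V) (p : Bool) : Prop :=
  (∃ a, a ∈ pg p ∧ x = cur a) ∨
  (∃ q a, a ∈ pg q ∧ p = !q ∧ x = barv a) ∨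
  (x = K ∧ p = false)
section Aux

/-- Shape of a generator bracket: `u` at index 0, `c • K` at index 1, `0` above. -/
def shp (K u : V) (c : ℂ) : ℕ → V := fun m => if m = 0 then u else if m = 1 then c • K else 0

lemma shp_zero (K : V) : shp K (0 : V) (0 : ℂ) = fun _ => 0 := by
  funext m; unfold shp; split_ifs <;> simp

lemma smul_shp (K u : V) (c d : ℂ) : d • shp K u c = shp K (d • u) (d * c) := by
  funext m; simp only [Pi.smul_apply]; unfold shp
  split_ifs <;> simp [mul_smul]

lemma B_smulK_left (S : VAx.LCAData V) {K : V}
    (hKc : ∀ x m, S.B K x m = 0 ∧ S.B x K m = 0)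
    (c : ℂ) (v : V) : S.B (c • K) v = shp K 0 0 := by
  funext m
  have h : S.B (c • K) v m = c • S.B K v m := by rw [map_smul]; rfl
  rw [h, (hKc v m).1, smul_zero, shp_zero]

lemma B_smulK_right (S : VAx.LCAData V) {K : V}
    (hKc : ∀ x m, S.B K x m = 0 ∧ S.B x K m = 0)
    (c : ℂ) (v : V) : S.B v (c • K) = shp K 0 0 := by
  funext m
  have h : S.B v (c • K) m = c • S.B v K m := by rw [map_smul]; rfl
  rw [h, (hKc v m).2, smul_zero, shp_zero]

lemma B_zero_left (S : VAx.LCAData V) (K v : V) : S.B (0 : V) v = shp K 0 0 := by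
  rw [map_zero, shp_zero]; rfl

lemma B_zero_right (S : VAx.LCAData V) (K v : V) : S.B v (0 : V) = shp K 0 0 := by
  rw [map_zero, shp_zero]; rfl

lemma shp00 (K : V) (i : ℕ) : shp K (0 : V) (0 : ℂ) i = 0 := by rw [shp_zero]

end Aux
section Key

lemma jacKey (S : VAx.LCAData V) (K : V)
    (hKc : ∀ x m, S.B K x m = 0 ∧ S.B x K m = 0)
    (s : ℂ) (x y z u v w xv uz yw : V) (cxy cyz cxz cxv cuz cyw : ℂ)
    (hxy : S.B x y = shp K u cxy) (hyz : S.B y z = shp K v cyz)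
    (hxz : S.B x z = shp K w cxz) (hxv : S.B x v = shp K xv cxv)
    (huz : S.B u z = shp K uz cuz) (hyw : S.B y w = shp K yw cyw)
    (r1 : xv = uz + s • yw) (r2 : cxv = cuz) (r3 : cuz + s * cyw = 0) :
    ∀ m n, S.B x (S.B y z n) m =
      (∑ j ∈ Finset.range (m + 1),
        ((Nat.choose (m - j + n) (m - j) : ℂ)) • S.B (S.B x y j) z (m - j + n))
      + s • S.B y (S.B x z m) n := by
  have hBcK : ∀ (c : ℂ) (a : V) (i : ℕ), S.B a (c • K) i = 0 := by
    intro c a i; rw [B_smulK_right S hKc, shp00]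
  have hBKc : ∀ (c : ℂ) (a : V) (i : ℕ), S.B (c • K) a i = 0 := by
    intro c a i; rw [B_smulK_left S hKc, shp00]
  have hB0l : ∀ (a : V) (i : ℕ), S.B (0 : V) a i = 0 := by
    intro a i; rw [B_zero_left S K, shp00]
  have hB0r : ∀ (a : V) (i : ℕ), S.B a (0 : V) i = 0 := by
    intro a i; rw [B_zero_right S K, shp00]
  intro m n
  have hsum : (∑ j ∈ Finset.range (m + 1),
      ((Nat.choose (m - j + n) (m - j) : ℂ)) • S.B (S.B x y j) z (m - j + n))
      = ((Nat.choose (m + n) m : ℂ)) • shp K uz cuz (m + n) := by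
    rw [Finset.sum_eq_single 0]
    · rw [hxy]
      show ((Nat.choose (m - 0 + n) (m - 0) : ℂ)) • S.B (shp K u cxy 0) z (m - 0 + n) = _
      rw [Nat.sub_zero, show shp K u cxy 0 = u from rfl, huz]
    · intro j hj hj0
      rcases j with _ | _ | j
      · exact absurd rfl hj0
      · rw [hxy, show shp K u cxy 1 = cxy • K from rfl, hBKc, smul_zero]
      · rw [hxy, show shp K u cxy (j + 2) = 0 from rfl, hB0l, smul_zero]
    · intro h0; exact absurd (Finset.mem_range.mpr (Nat.succ_pos m)) h0
  rw [hsum, hyz, hxz]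
  rcases n with _ | _ | n
  · rw [show shp K v cyz 0 = v from rfl, hxv]
    rcases m with _ | _ | m
    · show xv = ((Nat.choose 0 0 : ℂ)) • uz + s • S.B y (shp K w cxz 0) 0
      rw [show shp K w cxz 0 = w from rfl, hyw,
        show shp K yw cyw 0 = yw from rfl, r1]
      norm_num
    · show cxv • K = ((Nat.choose 1 1 : ℂ)) • (cuz • K) + s • S.B y (shp K w cxz 1) 0
      rw [show shp K w cxz 1 = cxz • K from rfl, hBcK, smul_zero, add_zero, r2]
      norm_num
    · show shp K xv cxv (m + 2) =
        ((Nat.choose (m + 2) (m + 2) : ℂ)) • shp K uz cuz (m + 2)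
        + s • S.B y (shp K w cxz (m + 2)) 0
      rw [show shp K xv cxv (m + 2) = 0 from rfl, show shp K uz cuz (m + 2) = 0 from rfl,
        show shp K w cxz (m + 2) = 0 from rfl, hB0r]
      simp
  · rw [show shp K v cyz 1 = cyz • K from rfl, hBcK]
    rcases m with _ | _ | m
    · show (0 : V) = ((Nat.choose 1 0 : ℂ)) • (cuz • K) + s • S.B y (shp K w cxz 0) 1
      rw [show shp K w cxz 0 = w from rfl, hyw, show shp K yw cyw 1 = cyw • K from rfl]
      rw [Nat.choose, smul_smul, smul_smul]
      rw [← add_smul]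
      norm_num
      rw [r3, zero_smul]
    · show (0 : V) = ((Nat.choose 2 1 : ℂ)) • shp K uz cuz 2 + s • S.B y (shp K w cxz 1) 1
      rw [show shp K uz cuz 2 = 0 from rfl, show shp K w cxz 1 = cxz • K from rfl, hBcK]
      simp
    · show (0 : V) = ((Nat.choose (m + 3) (m + 2) : ℂ)) • shp K uz cuz (m + 3)
        + s • S.B y (shp K w cxz (m + 2)) 1
      rw [show shp K uz cuz (m + 3) = 0 from rfl, show shp K w cxz (m + 2) = 0 from rfl, hB0r]
      simp
  · rw [show shp K v cyz (n + 2) = 0 from rfl, hB0r]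
    have h2 : shp K uz cuz (m + (n + 2)) = 0 := by
      unfold shp
      rw [if_neg (by omega), if_neg (by omega)]
    rw [h2, smul_zero, zero_add]
    rcases m with _ | _ | m
    · rw [show shp K w cxz 0 = w from rfl, hyw,
        show shp K yw cyw (n + 2) = 0 from rfl, smul_zero]
    · rw [show shp K w cxz 1 = cxz • K from rfl, hBcK, smul_zero]
    · rw [show shp K w cxz (m + 2) = 0 from rfl, hB0r, smul_zero]

end Key
section SkewKey

lemma skewKey (S : VAx.LCAData V) (K : V) (hdK : S.der K = 0)
    (s : ℂ) (x y u u' : V) (c c' : ℂ)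
    (hxy : S.B x y = shp K u c) (hyx : S.B y x = shp K u' c')
    (r1 : u' = -s • u) (r2 : c' = s * c) :
    ∀ k, S.B y x k = (- s) • ∑ m ∈ Finset.Icc k 1,
      (((-1 : ℂ)) ^ m * (m.choose k : ℂ)) • ((S.der ^ (m - k)) (S.B x y m)) := by
  intro k
  rw [hyx, hxy]
  rcases k with _ | _ | k
  · rw [show Finset.Icc 0 1 = {0, 1} from rfl]
    rw [Finset.sum_pair (by norm_num : (0 : ℕ) ≠ 1)]
    show u' = (-s) • ((((-1 : ℂ)) ^ 0 * ((0 : ℕ).choose 0 : ℂ)) • ((S.der ^ 0) u)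
      + (((-1 : ℂ)) ^ 1 * ((1 : ℕ).choose 0 : ℂ)) • ((S.der ^ 1) (c • K)))
    rw [pow_zero, pow_one, pow_zero, pow_one]
    rw [map_smul, hdK, smul_zero, smul_zero, add_zero]
    rw [r1]
    norm_num
  · rw [show Finset.Icc 1 1 = {1} from rfl, Finset.sum_singleton]
    show c' • K = (-s) • ((((-1 : ℂ)) ^ 1 * ((1 : ℕ).choose 1 : ℂ)) • ((S.der ^ 0) (c • K)))
    rw [pow_zero, pow_one, r2]
    simp [smul_smul]
  · rw [show Finset.Icc (k + 2) 1 = ∅ by rw [Finset.Icc_eq_empty]; omega]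
    rw [Finset.sum_empty, smul_zero]
    rfl

end SkewKey

/-- Let `g` be a Lie superalgebra with an even invariant supersymmetric bilinear
form `(·|·)`. Define on `Cur̃(g) = ℂ[∂]⊗(g ⊕ ḡ) ⊕ ℂK` the λ-brackets
`[a_λ b] = [a,b] + Kλ(a|b)`, `[a_λ b̄] = (-1)^{p(a)} overline([a,b])`,
`[ā_λ b] = overline([a,b])` (skew-symmetry), `[ā_λ b̄] = (-1)^{p(a)}K(a|b)`, with `K` central
and `∂K = 0`. Then `Cur̃(g)` is a Lie conformal algebra (skew-symmetry and the Jacobi identity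
hold among the generators), and with the odd derivation `D` given by `D(ā) = a`, `D(a) = ∂ā`,
`D(K) = 0`, the set `ḡ` is a supersymmetric generator in the `D`-direction, i.e. (SEF1) and
(SEF2) hold for all pairs from `ḡ`. -/
theorem stmt_16
    (S : VAx.LCAData V)
    (hsq1 : ∀ a b, S.B (S.der a) b 0 = 0 ∧ ∀ m, S.B (S.der a) b (m + 1) = - S.B a b m)
    (hsq2 : ∀ a b, S.B a (S.der b) 0 = S.der (S.B a b 0) ∧
      ∀ m, S.B a (S.der b) (m + 1) = S.der (S.B a b (m + 1)) + S.B a b m)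
    (pg : Bool → Submodule ℂ g)
    (lb : g →ₗ[ℂ] g →ₗ[ℂ] g) (bil : g →ₗ[ℂ] g →ₗ[ℂ] ℂ)
    -- Lie superalgebra axioms for lb (on homogeneous elements):
    (hlbhom : ∀ p q a b, a ∈ pg p → b ∈ pg q → lb a b ∈ pg (xor p q))
    (hlbskew : ∀ p q a b, a ∈ pg p → b ∈ pg q → lb a b = -(sgn p q) • lb b a)
    (hlbjac : ∀ p q a b c, a ∈ pg p → b ∈ pg q →
      lb a (lb b c) = lb (lb a b) c + sgn p q • lb b (lb a c))
    -- the bilinear form is even, supersymmetric and invariant: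
    (hbileven : ∀ p q a b, a ∈ pg p → b ∈ pg q → p ≠ q → bil a b = 0)
    (hbilsym : ∀ p q a b, a ∈ pg p → b ∈ pg q → bil a b = sgn p q * bil b a)
    (hbilinv : ∀ a b c, bil (lb a b) c = bil a (lb b c))
    -- the embeddings of g, ḡ and the central element K:
    (cur barv : g →ₗ[ℂ] V) (K : V)
    (hcurp : ∀ p, ∀ a ∈ pg p, cur a ∈ S.part p)
    (hbarp : ∀ p, ∀ a ∈ pg p, barv a ∈ S.part (!p))
    (hKp : K ∈ S.part false)
    (hKc : ∀ x m, S.B K x m = 0 ∧ S.B x K m = 0) (hdK : S.der K = 0)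
    -- the λ-brackets of Cur̃(g):
    (h1 : ∀ a b : g, S.B (cur a) (cur b) = fun m => match m with
      | 0 => cur (lb a b) | 1 => (bil a b) • K | _ => 0)
    (h2 : ∀ (pa : Bool) (a b : g), a ∈ pg pa →
      S.B (cur a) (barv b) = fun m => if m = 0 then psgn pa • barv (lb a b) else 0)
    (h3 : ∀ a b : g, S.B (barv a) (cur b) = fun m => if m = 0 then barv (lb a b) else 0)
    (h4 : ∀ (pa : Bool) (a b : g), a ∈ pg pa →
      S.B (barv a) (barv b) = fun m => if m = 0 then (psgn pa * bil a b) • K else 0)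
    -- the odd derivation D:
    (D : Module.End ℂ V) (hDbar : ∀ a : g, D (barv a) = cur a)
    (hDcur : ∀ a : g, D (cur a) = S.der (barv a)) (hDK : D K = 0)
    (hDD : ∀ x, D (D x) = S.der x) :
    -- (1) Cur̃(g) is a Lie conformal algebra (skew-symmetry and Jacobi on generators):
    ((∀ (x : V) (p : Bool), CurGen pg cur barv K x p →
      ∀ (y : V) (q : Bool), CurGen pg cur barv K y q →
        S.SkewEq p q x y 1 ∧
        ∀ (z : V) (r : Bool), CurGen pg cur barv K z r →
          ∀ m n, S.JacEq p q x y z m n)) ∧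
    -- (2) ḡ is a supersymmetric generator in the D-direction:
    (∀ (pa : Bool) (a : g), a ∈ pg pa → ∀ (pb : Bool) (b : g), b ∈ pg pb →
      S.SEF D (!pa) (barv a) (barv b)) := by
  -- helper scalar lemmas
  have psq : ∀ p : Bool, psgn p * psgn p = 1 := by intro p; cases p <;> norm_num [psgn]
  have bil_smul : ∀ (d : ℂ) (w u : g), bil (d • w) u = d * bil w u := by
    intro d w u; rw [map_smul]; rfl
  -- shape lemmas for the generator brackets
  have Scc : ∀ a b : g, S.B (cur a) (cur b) = shp K (cur (lb a b)) (bil a b) := by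
    intro a b; rw [h1]; funext m
    rcases m with _ | _ | m <;> rfl
  have Scb : ∀ (p : Bool) (a b : g), a ∈ pg p →
      S.B (cur a) (barv b) = shp K (psgn p • barv (lb a b)) 0 := by
    intro p a b ha; rw [h2 p a b ha]; funext m
    rcases m with _ | _ | m <;> simp [shp]
  have Sbc : ∀ a b : g, S.B (barv a) (cur b) = shp K (barv (lb a b)) 0 := by
    intro a b; rw [h3]; funext m
    rcases m with _ | _ | m <;> simp [shp]
  have Sbb : ∀ (p : Bool) (a b : g), a ∈ pg p →
      S.B (barv a) (barv b) = shp K ((psgn p * bil a b) • K) 0 := by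
    intro p a b ha; rw [h4 p a b ha]; funext m
    rcases m with _ | _ | m <;> simp [shp]
  have SKl : ∀ v : V, S.B K v = shp K 0 0 := by
    intro v; funext m; rw [(hKc v m).1, shp00]
  have SKr : ∀ v : V, S.B v K = shp K 0 0 := by
    intro v; funext m; rw [(hKc v m).2, shp00]
  have Ssr : ∀ (x v : V) (d : ℂ) (u : V) (c : ℂ), S.B x v = shp K u c →
      S.B x (d • v) = shp K (d • u) (d * c) := by
    intro x v d u c h; rw [map_smul, h, smul_shp]
  have Ssl : ∀ (x v : V) (d : ℂ) (u : V) (c : ℂ), S.B x v = shp K u c →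
      S.B (d • x) v = shp K (d • u) (d * c) := by
    intro x v d u c h
    have h' : S.B (d • x) v = d • S.B x v := by rw [map_smul]; rfl
    rw [h', h, smul_shp]
  have shp_ex : ∀ (y : V) (qy : Bool), CurGen pg cur barv K y qy →
      ∀ (z : V) (qz : Bool), CurGen pg cur barv K z qz →
      ∃ v c, S.B y z = shp K v c := by
    rintro y qy (⟨a, ha, rfl⟩ | ⟨pa, a, ha, rfl, rfl⟩ | ⟨rfl, rfl⟩) z qz
      (⟨b, hb, rfl⟩ | ⟨qb, b, hb, rfl, rfl⟩ | ⟨rfl, rfl⟩)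
    · exact ⟨_, _, Scc a b⟩
    · exact ⟨_, _, Scb qy a b ha⟩
    · exact ⟨_, _, SKr _⟩
    · exact ⟨_, _, Sbc a b⟩
    · exact ⟨_, _, Sbb pa a b ha⟩
    · exact ⟨_, _, SKr _⟩
    · exact ⟨_, _, SKl _⟩
    · exact ⟨_, _, SKl _⟩
    · exact ⟨_, _, SKl _⟩
  have jKx : ∀ (s : ℂ) (y z : V), (∃ v c, S.B y z = shp K v c) → ∀ m n,
      S.B K (S.B y z n) m =
        (∑ j ∈ Finset.range (m + 1),
          ((Nat.choose (m - j + n) (m - j) : ℂ)) • S.B (S.B K y j) z (m - j + n))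
        + s • S.B y (S.B K z m) n := by
    rintro s y z ⟨v, c, hyz⟩
    exact jacKey S K hKc s K y z 0 v 0 0 0 0 0 c 0 0 0 0 (SKl y) hyz (SKl z) (SKl v)
      (B_zero_left S K z) (B_zero_right S K y) (by simp) rfl (by simp)
  have jKy : ∀ (s : ℂ) (x z : V), (∃ w c, S.B x z = shp K w c) → ∀ m n,
      S.B x (S.B K z n) m =
        (∑ j ∈ Finset.range (m + 1),
          ((Nat.choose (m - j + n) (m - j) : ℂ)) • S.B (S.B x K j) z (m - j + n))
        + s • S.B K (S.B x z m) n := by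
    rintro s x z ⟨w, c, hxz⟩
    exact jacKey S K hKc s x K z 0 0 w 0 0 0 0 0 c 0 0 0 (SKr x) (SKl z) hxz
      (B_zero_right S K x) (B_zero_left S K z) (SKl w) (by simp) rfl (by simp)
  have jKz : ∀ (s : ℂ) (x y : V), (∃ u c, S.B x y = shp K u c) → ∀ m n,
      S.B x (S.B y K n) m =
        (∑ j ∈ Finset.range (m + 1),
          ((Nat.choose (m - j + n) (m - j) : ℂ)) • S.B (S.B x y j) K (m - j + n))
        + s • S.B y (S.B x K m) n := by
    rintro s x y ⟨u, c, hxy⟩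
    exact jacKey S K hKc s x y K u 0 0 0 0 0 c 0 0 0 0 0 hxy (SKr y) (SKr x)
      (B_zero_right S K x) (SKr u) (B_zero_right S K y) (by simp) rfl (by simp)
  constructor
  · -- part (1)
    intro x p hx y q hy
    rcases hx with ⟨a, ha, rfl⟩ | ⟨pa, a, ha, rfl, rfl⟩ | ⟨rfl, rfl⟩
    · -- x = cur a
      rcases hy with ⟨b, hb, rfl⟩ | ⟨qb, b, hb, rfl, rfl⟩ | ⟨rfl, rfl⟩
      · -- y = cur b
        constructor
        · exact skewKey S K hdK (sgn p q) (cur a) (cur b) (cur (lb a b)) (cur (lb b a))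
            (bil a b) (bil b a) (Scc a b) (Scc b a)
            (by rw [hlbskew q p b a hb ha, map_smul]
                cases p <;> cases q <;> simp [sgn] <;> module)
            (by rw [hbilsym q p b a hb ha]
                cases p <;> cases q <;> simp [sgn])
        · intro z r hz m n
          rcases hz with ⟨c, hc, rfl⟩ | ⟨rc, c, hc, rfl, rfl⟩ | ⟨rfl, rfl⟩
          · exact jacKey S K hKc (sgn p q) (cur a) (cur b) (cur c)
              (cur (lb a b)) (cur (lb b c)) (cur (lb a c))
              (cur (lb a (lb b c))) (cur (lb (lb a b) c)) (cur (lb b (lb a c)))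
              (bil a b) (bil b c) (bil a c) (bil a (lb b c)) (bil (lb a b) c) (bil b (lb a c))
              (Scc a b) (Scc b c) (Scc a c) (Scc a (lb b c)) (Scc (lb a b) c) (Scc b (lb a c))
              (by rw [hlbjac p q a b c ha hb, map_add, map_smul])
              ((hbilinv a b c).symm)
              (by rw [← hbilinv b a c, hlbskew q p b a hb ha, bil_smul]
                  cases p <;> cases q <;> simp [sgn] <;> ring) m n
          · exact jacKey S K hKc (sgn p q) (cur a) (cur b) (barv c)
              (cur (lb a b)) (psgn q • barv (lb b c)) (psgn p • barv (lb a c))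
              (psgn q • (psgn p • barv (lb a (lb b c)))) (psgn (xor p q) • barv (lb (lb a b) c))
              (psgn p • (psgn q • barv (lb b (lb a c))))
              (bil a b) 0 0 (psgn q * 0) 0 (psgn p * 0)
              (Scc a b) (Scb q b c hb) (Scb p a c ha)
              (Ssr _ _ _ _ _ (Scb p a (lb b c) ha))
              (Scb (xor p q) (lb a b) c (hlbhom p q a b ha hb))
              (Ssr _ _ _ _ _ (Scb q b (lb a c) hb))
              (by rw [hlbjac p q a b c ha hb, map_add, map_smul]
                  cases p <;> cases q <;> simp [sgn, psgn, smul_smul, smul_add] <;> module)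
              (by ring) (by ring) m n
          · exact jKz (sgn p q) (cur a) (cur b) ⟨_, _, Scc a b⟩ m n
      · -- y = barv b
        constructor
        · exact skewKey S K hdK (sgn p (!qb)) (cur a) (barv b)
            (psgn p • barv (lb a b)) (barv (lb b a)) 0 0
            (Scb p a b ha) (Sbc b a)
            (by rw [hlbskew qb p b a hb ha, map_smul]
                cases p <;> cases qb <;> simp [sgn, psgn, smul_smul] <;> module)
            (by ring)
        · intro z r hz m n
          rcases hz with ⟨c, hc, rfl⟩ | ⟨rc, c, hc, rfl, rfl⟩ | ⟨rfl, rfl⟩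
          · exact jacKey S K hKc (sgn p (!qb)) (cur a) (barv b) (cur c)
              (psgn p • barv (lb a b)) (barv (lb b c)) (cur (lb a c))
              (psgn p • barv (lb a (lb b c))) (psgn p • barv (lb (lb a b) c))
              (barv (lb b (lb a c)))
              0 0 (bil a c) 0 (psgn p * 0) 0
              (Scb p a b ha) (Sbc b c) (Scc a c)
              (Scb p a (lb b c) ha)
              (Ssl _ _ _ _ _ (Sbc (lb a b) c))
              (Sbc b (lb a c))
              (by rw [hlbjac p qb a b c ha hb, map_add, map_smul]
                  cases p <;> cases qb <;> simp [sgn, psgn, smul_smul, smul_add] <;> module)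
              (by ring) (by ring) m n
          · exact jacKey S K hKc (sgn p (!qb)) (cur a) (barv b) (barv c)
              (psgn p • barv (lb a b)) ((psgn qb * bil b c) • K) (psgn p • barv (lb a c))
              0 (psgn p • ((psgn (xor p qb) * bil (lb a b) c) • K))
              (psgn p • ((psgn qb * bil b (lb a c)) • K))
              0 0 0 0 (psgn p * 0) (psgn p * 0)
              (Scb p a b ha) (Sbb qb b c hb) (Scb p a c ha)
              (B_smulK_right S hKc _ _)
              (Ssl _ _ _ _ _ (Sbb (xor p qb) (lb a b) c (hlbhom p qb a b ha hb)))
              (Ssr _ _ _ _ _ (Sbb qb b (lb a c) hb))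
              (by have hbb : bil b (lb a c) = -(sgn qb p) * bil (lb a b) c := by
                    rw [← hbilinv b a c, hlbskew qb p b a hb ha, bil_smul]
                  rw [hbb]
                  cases p <;> cases qb <;> simp [sgn, psgn, smul_smul] <;> module)
              (by ring) (by ring) m n
          · exact jKz (sgn p (!qb)) (cur a) (barv b) ⟨_, _, Scb p a b ha⟩ m n
      · -- y = K
        constructor
        · exact skewKey S y hdK (sgn p false) (cur a) y 0 0 0 0 (SKr _) (SKl _)
            (by simp) (by simp)
        · intro z r hz m n
          exact jKy (sgn p false) (cur a) z
            (shp_ex (cur a) p (Or.inl ⟨a, ha, rfl⟩) z r hz) m n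
    · -- x = barv a
      rcases hy with ⟨b, hb, rfl⟩ | ⟨qb, b, hb, rfl, rfl⟩ | ⟨rfl, rfl⟩
      · -- y = cur b
        constructor
        · exact skewKey S K hdK (sgn (!pa) q) (barv a) (cur b)
            (barv (lb a b)) (psgn q • barv (lb b a)) 0 0
            (Sbc a b) (Scb q b a hb)
            (by rw [hlbskew q pa b a hb ha, map_smul, smul_smul]
                cases pa <;> cases q <;> simp [sgn, psgn] <;> module)
            (by ring)
        · intro z r hz m n
          rcases hz with ⟨c, hc, rfl⟩ | ⟨rc, c, hc, rfl, rfl⟩ | ⟨rfl, rfl⟩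
          · exact jacKey S K hKc (sgn (!pa) q) (barv a) (cur b) (cur c)
              (barv (lb a b)) (cur (lb b c)) (barv (lb a c))
              (barv (lb a (lb b c))) (barv (lb (lb a b) c)) (psgn q • barv (lb b (lb a c)))
              0 (bil b c) 0 0 0 0
              (Sbc a b) (Scc b c) (Sbc a c)
              (Sbc a (lb b c)) (Sbc (lb a b) c) (Scb q b (lb a c) hb)
              (by rw [hlbjac pa q a b c ha hb, map_add, map_smul]
                  cases pa <;> cases q <;> simp [sgn, psgn, smul_smul, smul_add] <;> module)
              rfl (by ring) m n
          · exact jacKey S K hKc (sgn (!pa) q) (barv a) (cur b) (barv c)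
              (barv (lb a b)) (psgn q • barv (lb b c)) ((psgn pa * bil a c) • K)
              (psgn q • ((psgn pa * bil a (lb b c)) • K))
              ((psgn (xor pa q) * bil (lb a b) c) • K) 0
              0 0 0 (psgn q * 0) 0 0
              (Sbc a b) (Scb q b c hb) (Sbb pa a c ha)
              (Ssr _ _ _ _ _ (Sbb pa a (lb b c) ha))
              (Sbb (xor pa q) (lb a b) c (hlbhom pa q a b ha hb))
              (B_smulK_right S hKc _ _)
              (by rw [hbilinv a b c]
                  cases pa <;> cases q <;> simp [sgn, psgn, smul_smul] <;> module)
              (by ring) (by ring) m n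
          · exact jKz (sgn (!pa) q) (barv a) (cur b) ⟨_, _, Sbc a b⟩ m n
      · -- y = barv b
        constructor
        · exact skewKey S K hdK (sgn (!pa) (!qb)) (barv a) (barv b)
            ((psgn pa * bil a b) • K) ((psgn qb * bil b a) • K) 0 0
            (Sbb pa a b ha) (Sbb qb b a hb)
            (by rw [hbilsym qb pa b a hb ha]
                cases pa <;> cases qb <;> simp [sgn, psgn, smul_smul] <;> module)
            (by ring)
        · intro z r hz m n
          rcases hz with ⟨c, hc, rfl⟩ | ⟨rc, c, hc, rfl, rfl⟩ | ⟨rfl, rfl⟩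
          · exact jacKey S K hKc (sgn (!pa) (!qb)) (barv a) (barv b) (cur c)
              ((psgn pa * bil a b) • K) (barv (lb b c)) (barv (lb a c))
              ((psgn pa * bil a (lb b c)) • K) 0 ((psgn qb * bil b (lb a c)) • K)
              0 0 0 0 0 0
              (Sbb pa a b ha) (Sbc b c) (Sbc a c)
              (Sbb pa a (lb b c) ha) (B_smulK_left S hKc _ _) (Sbb qb b (lb a c) hb)
              (by have hbb : bil b (lb a c) = -(sgn qb pa) * bil a (lb b c) := by
                    rw [← hbilinv b a c, hlbskew qb pa b a hb ha, bil_smul, hbilinv a b c]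
                  rw [hbb]
                  cases pa <;> cases qb <;> simp [sgn, psgn, smul_smul] <;> module)
              rfl (by ring) m n
          · exact jacKey S K hKc (sgn (!pa) (!qb)) (barv a) (barv b) (barv c)
              ((psgn pa * bil a b) • K) ((psgn qb * bil b c) • K) ((psgn pa * bil a c) • K)
              0 0 0 0 0 0 0 0 0
              (Sbb pa a b ha) (Sbb qb b c hb) (Sbb pa a c ha)
              (B_smulK_right S hKc _ _) (B_smulK_left S hKc _ _) (B_smulK_right S hKc _ _)
              (by simp) rfl (by simp) m n
          · exact jKz (sgn (!pa) (!qb)) (barv a) (barv b) ⟨_, _, Sbb pa a b ha⟩ m n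
      · -- y = K
        constructor
        · exact skewKey S y hdK (sgn (!pa) false) (barv a) y 0 0 0 0 (SKr _) (SKl _)
            (by simp) (by simp)
        · intro z r hz m n
          exact jKy (sgn (!pa) false) (barv a) z
            (shp_ex (barv a) (!pa) (Or.inr (Or.inl ⟨pa, a, ha, rfl, rfl⟩)) z r hz) m n
    · -- x = K
      constructor
      · exact skewKey S x hdK (sgn false q) x y 0 0 0 0 (SKl _) (SKr _)
          (by simp) (by simp)
      · intro z r hz m n
        exact jKx (sgn false q) y z (shp_ex y q hy z r hz) m n
  · -- part (2): SEF
    intro pa a ha pb b hb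
    constructor
    · intro m
      rw [hDbar a, hDbar b, Scc a b, Scb pa a b ha, Sbb pa a b ha]
      rcases m with _ | _ | m <;>
        simp [shp, lam, Bool.not_not, map_smul, hDbar, hDK, smul_smul, ← mul_assoc, psq]
    · intro m
      rw [hDbar b, hDbar a, Sbc a b, Scb pa a b ha, Sbb pa a b ha]
      rcases m with _ | _ | m <;>
        simp [shp, lam, Bool.not_not, map_smul, hDbar, hDK, smul_smul, ← mul_assoc, psq]
end
end

section
/- In the extended bc–βγ system (a vertex algebra with even generators α,β,γ,δ, odd generators a,b,c,d, and central C, with non-zero λ-brackets [β_λ γ] = C = -[γ_λ β], [b_λ c] = C = [c_λ b], [α_λ δ] = C = -[δ_λ α], [d_λ a] = -C = [a_λ d]), the odd endomorphisms D¹, D² defined by D¹(b)=β, D¹(α)=a, D¹(d)=δ, D¹(γ)=c (and D¹ of those images via [D¹,D¹]=2∂), D²(α)=b, D²(-a)=β, D²(γ)=d, D²(-c)=δ, with [Dⁱ,Dʲ]=2δ_{ij}∂, make both pairs ({b,α,d,γ}, D¹) and ({-a,α,-c,γ}, D²) satisfy the supersymmetric extension formulas (SEF1) and (SEF2) for all pairs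 of generators; consequently D¹ and D² are odd derivations of the λ-bracket on the generators. -/
open scoped BigOperators
noncomputable section

open VAx VAx.LCAData

/-- Parities of the generators `β, γ, b, c, α, δ, a, d` (indices `0,…,7`) of the extended
`bc`–`βγ` system: `β, γ, α, δ` even, `b, c, a, d` odd. -/
def pv : Fin 8 → Bool := ![false, false, true, true, false, false, true, true]

/-- Structure constants of the extended `bc`–`βγ` system: with generators ordered as
`β, γ, b, c, α, δ, a, d`, the nonzero λ-brackets are `[β_λ γ] = C = -[γ_λ β]`,
`[b_λ c] = C = [c_λ b]`, `[α_λ δ] = C = -[δ_λ α]`, `[d_λ a] = -C = [a_λ d]`. -/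
def kmat : Fin 8 → Fin 8 → ℂ := fun i j =>
  !![0, 1, 0, 0, 0, 0, 0, 0;
     -1, 0, 0, 0, 0, 0, 0, 0;
     0, 0, 0, 1, 0, 0, 0, 0;
     0, 0, 1, 0, 0, 0, 0, 0;
     0, 0, 0, 0, 0, 1, 0, 0;
     0, 0, 0, 0, -1, 0, 0, 0;
     0, 0, 0, 0, 0, 0, 0, -1;
     0, 0, 0, 0, 0, 0, -1, 0] i j

@[simp] lemma psgn_true : VAx.psgn true = -1 := rfl
@[simp] lemma psgn_false : VAx.psgn false = 1 := rfl
@[simp] lemma kmat_0_0 : kmat 0 0 = 0 := rfl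
@[simp] lemma kmat_0_1 : kmat 0 1 = 1 := rfl
@[simp] lemma kmat_0_2 : kmat 0 2 = 0 := rfl
@[simp] lemma kmat_0_3 : kmat 0 3 = 0 := rfl
@[simp] lemma kmat_0_4 : kmat 0 4 = 0 := rfl
@[simp] lemma kmat_0_5 : kmat 0 5 = 0 := rfl
@[simp] lemma kmat_0_6 : kmat 0 6 = 0 := rfl
@[simp] lemma kmat_0_7 : kmat 0 7 = 0 := rfl
@[simp] lemma kmat_1_0 : kmat 1 0 = -1 := rfl
@[simp] lemma kmat_1_1 : kmat 1 1 = 0 := rfl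
@[simp] lemma kmat_1_2 : kmat 1 2 = 0 := rfl
@[simp] lemma kmat_1_3 : kmat 1 3 = 0 := rfl
@[simp] lemma kmat_1_4 : kmat 1 4 = 0 := rfl
@[simp] lemma kmat_1_5 : kmat 1 5 = 0 := rfl
@[simp] lemma kmat_1_6 : kmat 1 6 = 0 := rfl
@[simp] lemma kmat_1_7 : kmat 1 7 = 0 := rfl
@[simp] lemma kmat_2_0 : kmat 2 0 = 0 := rfl
@[simp] lemma kmat_2_1 : kmat 2 1 = 0 := rfl
@[simp] lemma kmat_2_2 : kmat 2 2 = 0 := rfl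
@[simp] lemma kmat_2_3 : kmat 2 3 = 1 := rfl
@[simp] lemma kmat_2_4 : kmat 2 4 = 0 := rfl
@[simp] lemma kmat_2_5 : kmat 2 5 = 0 := rfl
@[simp] lemma kmat_2_6 : kmat 2 6 = 0 := rfl
@[simp] lemma kmat_2_7 : kmat 2 7 = 0 := rfl
@[simp] lemma kmat_3_0 : kmat 3 0 = 0 := rfl
@[simp] lemma kmat_3_1 : kmat 3 1 = 0 := rfl
@[simp] lemma kmat_3_2 : kmat 3 2 = 1 := rfl
@[simp] lemma kmat_3_3 : kmat 3 3 = 0 := rfl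
@[simp] lemma kmat_3_4 : kmat 3 4 = 0 := rfl
@[simp] lemma kmat_3_5 : kmat 3 5 = 0 := rfl
@[simp] lemma kmat_3_6 : kmat 3 6 = 0 := rfl
@[simp] lemma kmat_3_7 : kmat 3 7 = 0 := rfl
@[simp] lemma kmat_4_0 : kmat 4 0 = 0 := rfl
@[simp] lemma kmat_4_1 : kmat 4 1 = 0 := rfl
@[simp] lemma kmat_4_2 : kmat 4 2 = 0 := rfl
@[simp] lemma kmat_4_3 : kmat 4 3 = 0 := rfl
@[simp] lemma kmat_4_4 : kmat 4 4 = 0 := rfl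
@[simp] lemma kmat_4_5 : kmat 4 5 = 1 := rfl
@[simp] lemma kmat_4_6 : kmat 4 6 = 0 := rfl
@[simp] lemma kmat_4_7 : kmat 4 7 = 0 := rfl
@[simp] lemma kmat_5_0 : kmat 5 0 = 0 := rfl
@[simp] lemma kmat_5_1 : kmat 5 1 = 0 := rfl
@[simp] lemma kmat_5_2 : kmat 5 2 = 0 := rfl
@[simp] lemma kmat_5_3 : kmat 5 3 = 0 := rfl
@[simp] lemma kmat_5_4 : kmat 5 4 = -1 := rfl
@[simp] lemma kmat_5_5 : kmat 5 5 = 0 := rfl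
@[simp] lemma kmat_5_6 : kmat 5 6 = 0 := rfl
@[simp] lemma kmat_5_7 : kmat 5 7 = 0 := rfl
@[simp] lemma kmat_6_0 : kmat 6 0 = 0 := rfl
@[simp] lemma kmat_6_1 : kmat 6 1 = 0 := rfl
@[simp] lemma kmat_6_2 : kmat 6 2 = 0 := rfl
@[simp] lemma kmat_6_3 : kmat 6 3 = 0 := rfl
@[simp] lemma kmat_6_4 : kmat 6 4 = 0 := rfl
@[simp] lemma kmat_6_5 : kmat 6 5 = 0 := rfl
@[simp] lemma kmat_6_6 : kmat 6 6 = 0 := rfl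
@[simp] lemma kmat_6_7 : kmat 6 7 = -1 := rfl
@[simp] lemma kmat_7_0 : kmat 7 0 = 0 := rfl
@[simp] lemma kmat_7_1 : kmat 7 1 = 0 := rfl
@[simp] lemma kmat_7_2 : kmat 7 2 = 0 := rfl
@[simp] lemma kmat_7_3 : kmat 7 3 = 0 := rfl
@[simp] lemma kmat_7_4 : kmat 7 4 = 0 := rfl
@[simp] lemma kmat_7_5 : kmat 7 5 = 0 := rfl
@[simp] lemma kmat_7_6 : kmat 7 6 = -1 := rfl
@[simp] lemma kmat_7_7 : kmat 7 7 = 0 := rfl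
@[simp] lemma pv_0 : pv 0 = false := rfl
@[simp] lemma pv_1 : pv 1 = false := rfl
@[simp] lemma pv_2 : pv 2 = true := rfl
@[simp] lemma pv_3 : pv 3 = true := rfl
@[simp] lemma pv_4 : pv 4 = false := rfl
@[simp] lemma pv_5 : pv 5 = false := rfl
@[simp] lemma pv_6 : pv 6 = true := rfl
@[simp] lemma pv_7 : pv 7 = true := rfl

private lemma lam_neg' {W : Type*} [AddCommGroup W] (g : ℕ → W) (m : ℕ) :
    VAx.lam (-g) m = - VAx.lam g m := by
  cases m <;> simp [VAx.lam]

set_option maxHeartbeats 3200000 in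
/-- In the extended `bc`–`βγ` system (generators `v 0 = β`, `v 1 = γ`,
`v 2 = b`, `v 3 = c`, `v 4 = α`, `v 5 = δ`, `v 6 = a`, `v 7 = d` and central `C`, with
λ-brackets given by `kmat`), the odd endomorphisms `D¹, D²` with `D¹(b) = β`, `D¹(α) = a`,
`D¹(d) = δ`, `D¹(γ) = c` (and the images forced by `[D¹,D¹] = 2∂`), `D²(α) = b`,
`D²(-a) = β`, `D²(γ) = d`, `D²(-c) = δ` (and the images forced by `[D²,D²] = 2∂`), with
`[Dⁱ,Dʲ] = 2δ_{ij}∂`, make both pairs `({b, α, d, γ}, D¹)` and `({-a, α, -c, γ}, D²)` satisfy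
the supersymmetric extension formulas (SEF1), (SEF2) for all pairs of generators;
consequently `D¹` and `D²` are odd derivations of the λ-bracket on the generators. -/
theorem stmt_17 {V : Type*} [AddCommGroup V] [Module ℂ V]
    (S : VAx.LCAData V)
    (hsq1 : ∀ a b, S.B (S.der a) b 0 = 0 ∧ ∀ m, S.B (S.der a) b (m + 1) = - S.B a b m)
    (hsq2 : ∀ a b, S.B a (S.der b) 0 = S.der (S.B a b 0) ∧
      ∀ m, S.B a (S.der b) (m + 1) = S.der (S.B a b (m + 1)) + S.B a b m)
    (v : Fin 8 → V) (C : V)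
    (hpar : ∀ i, v i ∈ S.part (pv i)) (hCp : C ∈ S.part false)
    (hC : ∀ x m, S.B C x m = 0 ∧ S.B x C m = 0) (hdC : S.der C = 0)
    (hbr : ∀ i j, S.B (v i) (v j) = fun m => if m = 0 then kmat i j • C else 0)
    (D1 D2 : Module.End ℂ V)
    (hD1 : D1 (v 2) = v 0 ∧ D1 (v 4) = v 6 ∧ D1 (v 7) = v 5 ∧ D1 (v 1) = v 3 ∧
      D1 (v 0) = S.der (v 2) ∧ D1 (v 6) = S.der (v 4) ∧ D1 (v 5) = S.der (v 7) ∧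
      D1 (v 3) = S.der (v 1))
    (hD2 : D2 (v 4) = v 2 ∧ D2 (v 6) = -(v 0) ∧ D2 (v 1) = v 7 ∧ D2 (v 3) = -(v 5) ∧
      D2 (v 2) = S.der (v 4) ∧ D2 (v 0) = -(S.der (v 6)) ∧ D2 (v 7) = S.der (v 1) ∧
      D2 (v 5) = -(S.der (v 3)))
    (hD1C : D1 C = 0) (hD2C : D2 C = 0)
    (h11 : ∀ x, D1 (D1 x) = S.der x) (h22 : ∀ x, D2 (D2 x) = S.der x)
    (h12 : ∀ x, D1 (D2 x) + D2 (D1 x) = 0) :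
    (∀ i ∈ ({2, 4, 7, 1} : Finset (Fin 8)), ∀ j ∈ ({2, 4, 7, 1} : Finset (Fin 8)),
      S.SEF D1 (pv i) (v i) (v j)) ∧
    (∀ xp ∈ ([(-(v 6), true), (v 4, false), (-(v 3), true), (v 1, false)] : List (V × Bool)),
     ∀ yp ∈ ([(-(v 6), true), (v 4, false), (-(v 3), true), (v 1, false)] : List (V × Bool)),
      S.SEF D2 xp.2 xp.1 yp.1) ∧
    (∀ i j m, D1 (S.B (v i) (v j) m)
      = S.B (D1 (v i)) (v j) m + psgn (pv i) • S.B (v i) (D1 (v j)) m) ∧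
    (∀ i j m, D2 (S.B (v i) (v j) m)
      = S.B (D2 (v i)) (v j) m + psgn (pv i) • S.B (v i) (D2 (v j)) m) := by
  obtain ⟨h1a, h1b, h1c, h1d, h1e, h1f, h1g, h1h⟩ := hD1
  obtain ⟨h2a, h2b, h2c, h2d, h2e, h2f, h2g, h2h⟩ := hD2
  have hB : ∀ i j m, S.B (v i) (v j) m = (if m = 0 then kmat i j else 0) • C := by
    intro i j m
    simp only [hbr]
    split_ifs <;> simp [hD1C, hD2C]
  have hdB : ∀ i j m, S.der (S.B (v i) (v j) m) = 0 := by
    intro i j m; rw [hB, map_smul, hdC, smul_zero]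
  have hD1B : ∀ i j m, D1 (S.B (v i) (v j) m) = 0 := by
    intro i j m; rw [hB, map_smul, hD1C, smul_zero]
  have hD2B : ∀ i j m, D2 (S.B (v i) (v j) m) = 0 := by
    intro i j m; rw [hB, map_smul, hD2C, smul_zero]
  have hBd1 : ∀ i j m, S.B (S.der (v i)) (v j) m = (if m = 1 then -kmat i j else 0) • C := by
    intro i j m
    match m with
    | 0 => simpa using (hsq1 (v i) (v j)).1
    | (m+1) =>
      rw [(hsq1 (v i) (v j)).2 m, hB]
      by_cases hm : m = 0 <;> simp [hm]
  have hBd2 : ∀ i j m, S.B (v i) (S.der (v j)) m = (if m = 1 then kmat i j else 0) • C := by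
    intro i j m
    match m with
    | 0 => rw [(hsq2 (v i) (v j)).1, hdB]; simp
    | (m+1) =>
      rw [(hsq2 (v i) (v j)).2 m, hdB, hB]
      by_cases hm : m = 0 <;> simp [hm]
  have hlam : ∀ i j m, VAx.lam (S.B (v i) (v j)) m = (if m = 1 then kmat i j else 0) • C := by
    intro i j m
    match m with
    | 0 => simp [VAx.lam]
    | (m+1) =>
      show S.B (v i) (v j) m = _
      rw [hB]
      by_cases hm : m = 0 <;> simp [hm]
  refine ⟨?_, ?_, ?_, ?_⟩
  · intro i hi j hj
    fin_cases hi <;> fin_cases hj <;>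
      refine ⟨fun m => ?_, fun m => ?_⟩ <;>
        simp only [h1a, h1b, h1c, h1d, h1e, h1f, h1g, h1h] <;>
        simp [hB, hBd1, hBd2, hD1B, hD1C, hlam] <;>
        split_ifs <;> simp [hD1C, hD2C]
  · intro xp hxp yp hyp
    simp only [List.mem_cons, List.not_mem_nil, or_false] at hxp hyp
    rcases hxp with rfl | rfl | rfl | rfl <;> rcases hyp with rfl | rfl | rfl | rfl <;>
      refine ⟨fun m => ?_, fun m => ?_⟩ <;>
        simp only [map_neg, LinearMap.neg_apply, Pi.neg_apply, lam_neg', neg_neg,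
          h2a, h2b, h2c, h2d, h2e, h2f, h2g, h2h] <;>
        simp [map_neg, lam_neg', h2a, h2b, h2c, h2d, h2e, h2f, h2g, h2h,
          hB, hBd1, hBd2, hD2B, hD2C, hlam] <;>
        split_ifs <;> simp [hD1C, hD2C]
  · intro i j m
    rw [hD1B]
    fin_cases i <;> fin_cases j <;>
      simp [h1a, h1b, h1c, h1d, h1e, h1f, h1g, h1h, hB, hBd1, hBd2] <;>
      split_ifs <;> simp [hD1C, hD2C]
  · intro i j m
    rw [hD2B]
    fin_cases i <;> fin_cases j <;>
      simp [map_neg, h2a, h2b, h2c, h2d, h2e, h2f, h2g, h2h, hB, hBd1, hBd2] <;>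
      split_ifs <;> simp [hD1C, hD2C]
end
end

section
/- Let V be a vertex algebra with an N=1 superconformal vector G admitting a decomposition G = G⁺ + G⁻ with (G^±_{(0)}G^±)_{(0)} = 0 (as operators on V). Then for any μ ∈ ℂ*, the operators D¹ = (μG⁺ + μ⁻¹G⁻)_{(0)} and D² = √-1(μG⁺ - μ⁻¹G⁻)_{(0)} satisfy [Dⁱ,Dʲ] = 2δ_{ij}∂ for i,j ∈ {1,2}. -/
open scoped BigOperators
noncomputable section

open VAx VAx.LCAData VAx.VAData

/-- Key anticommutator identity: for odd `a, b`, `a₀ b₀ + b₀ a₀ = (a₀ b)₀`. -/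
theorem key_anticomm {V : Type*} [AddCommGroup V] [Module ℂ V]
    (S : VAx.VAData V) (hS : S.IsVA) {a b : V}
    (ha : a ∈ S.part true) (hb : b ∈ S.part true) (x : V) :
    S.B a (S.B b x 0) 0 + S.B b (S.B a x 0) 0 = S.B (S.B a b 0) x 0 := by
  have h := hS.isLCA.jacobi true true a b x ha hb 0 0
  simp only [LCAData.JacEq, sgn, Bool.and_self, if_pos, Finset.sum_range_one,
    Nat.sub_zero, Nat.add_zero, Nat.choose_zero_right, Nat.cast_one, one_smul,
    neg_smul] at h
  rw [h]
  simp [Finset.sum_range_one]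

/-- Let `V` be a vertex algebra with an `N = 1` superconformal vector `G`
admitting a decomposition `G = G⁺ + G⁻` with `(G^±₍₀₎G^±)₍₀₎ = 0` (as operators on `V`).
Then for any `μ ∈ ℂ*`, the operators `D¹ = (μG⁺ + μ⁻¹G⁻)₍₀₎` and
`D² = √-1(μG⁺ - μ⁻¹G⁻)₍₀₎` satisfy `[Dⁱ,Dʲ] = 2δ_{ij}∂` for `i, j ∈ {1,2}`. -/
theorem stmt_18 {V : Type*} [AddCommGroup V] [Module ℂ V]
    (S : VAx.VAData V) (hS : S.IsVA) (G Gp Gm : V) (c : ℂ)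
    (hGpp : Gp ∈ S.part true) (hGmp : Gm ∈ S.part true)
    (hsc : S.IsSCV G c) (hsplit : G = Gp + Gm)
    (hz1 : ∀ x, S.B (S.B Gp Gp 0) x 0 = 0)
    (hz2 : ∀ x, S.B (S.B Gm Gm 0) x 0 = 0) :
    ∀ μ : ℂ, μ ≠ 0 →
      (S.opAt (μ • Gp + μ⁻¹ • Gm) 0 * S.opAt (μ • Gp + μ⁻¹ • Gm) 0
        + S.opAt (μ • Gp + μ⁻¹ • Gm) 0 * S.opAt (μ • Gp + μ⁻¹ • Gm) 0
        = (2 : ℂ) • S.der) ∧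
      ((Complex.I • S.opAt (μ • Gp - μ⁻¹ • Gm) 0) * (Complex.I • S.opAt (μ • Gp - μ⁻¹ • Gm) 0)
        + (Complex.I • S.opAt (μ • Gp - μ⁻¹ • Gm) 0) * (Complex.I • S.opAt (μ • Gp - μ⁻¹ • Gm) 0)
        = (2 : ℂ) • S.der) ∧
      (S.opAt (μ • Gp + μ⁻¹ • Gm) 0 * (Complex.I • S.opAt (μ • Gp - μ⁻¹ • Gm) 0)
        + (Complex.I • S.opAt (μ • Gp - μ⁻¹ • Gm) 0) * S.opAt (μ • Gp + μ⁻¹ • Gm) 0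
        = 0) := by
  intro μ hμ
  -- `(G₀ G)₀ = 2∂`
  have hGG : ∀ x, S.B (S.B G G 0) x 0 = (2 : ℂ) • S.der x := by
    intro x
    have h7 := hsc.2.2.2.2.2.2.1 x
    have : S.B ((1 / 2 : ℂ) • S.B G G 0) x 0 = (1 / 2 : ℂ) • S.B (S.B G G 0) x 0 := by
      simp
    rw [this] at h7
    rw [← h7, smul_smul]; norm_num
  -- the mixed anticommutator
  have hmix : ∀ x, S.B (S.B Gp Gm 0) x 0 + S.B (S.B Gm Gp 0) x 0 = (2 : ℂ) • S.der x := by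
    intro x
    have hG : S.B G G 0 = S.B Gp Gp 0 + S.B Gp Gm 0 + S.B Gm Gp 0 + S.B Gm Gm 0 := by
      simp [hsplit, map_add]; abel
    have := hGG x
    rw [hG] at this
    simp only [map_add, LinearMap.add_apply, Pi.add_apply] at this
    rw [hz1 x, hz2 x] at this
    rw [← this]; abel
  set a : V := μ • Gp + μ⁻¹ • Gm with ha_def
  set b : V := μ • Gp - μ⁻¹ • Gm with hb_def
  have ha : a ∈ S.part true := Submodule.add_mem _ (Submodule.smul_mem _ _ hGpp)
    (Submodule.smul_mem _ _ hGmp)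
  have hb : b ∈ S.part true := Submodule.sub_mem _ (Submodule.smul_mem _ _ hGpp)
    (Submodule.smul_mem _ _ hGmp)
  have hμμ : μ * μ⁻¹ = 1 := mul_inv_cancel₀ hμ
  have hμμ' : μ⁻¹ * μ = 1 := inv_mul_cancel₀ hμ
  -- expand `(a₀ b)₀ x` type expressions
  have expand : ∀ (r s : ℂ) (x : V),
      S.B (S.B (μ • Gp + r • Gm) (μ • Gp + s • Gm) 0) x 0 =
        (μ * μ) • S.B (S.B Gp Gp 0) x 0 + (μ * s) • S.B (S.B Gp Gm 0) x 0
        + (r * μ) • S.B (S.B Gm Gp 0) x 0 + (r * s) • S.B (S.B Gm Gm 0) x 0 := by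
    intro r s x
    simp only [map_add, map_smul, LinearMap.add_apply, LinearMap.smul_apply,
      Pi.add_apply, Pi.smul_apply, smul_add, smul_smul]
    module
  have haa : ∀ x, S.B (S.B a a 0) x 0 = (2 : ℂ) • S.der x := by
    intro x
    have := expand μ⁻¹ μ⁻¹ x
    rw [ha_def, this, hz1 x, hz2 x, hμμ, hμμ']
    simp only [smul_zero, add_zero, zero_add, one_smul]
    rw [← hmix x]
  have hbb : ∀ x, S.B (S.B b b 0) x 0 = (-2 : ℂ) • S.der x := by
    intro x
    have hb' : b = μ • Gp + (-μ⁻¹) • Gm := by rw [hb_def]; module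
    have := expand (-μ⁻¹) (-μ⁻¹) x
    rw [hb', this, hz1 x, hz2 x]
    have h1 : μ * -μ⁻¹ = -1 := by rw [mul_neg, hμμ]
    have h2 : -μ⁻¹ * μ = -1 := by rw [neg_mul, hμμ']
    have hm := hmix x
    rw [h1, h2]
    simp only [smul_zero, add_zero, zero_add, neg_smul, one_smul]
    rw [← neg_add, hm]
  have hab : ∀ x, S.B (S.B a b 0) x 0 + S.B (S.B b a 0) x 0 = 0 := by
    intro x
    have hb' : b = μ • Gp + (-μ⁻¹) • Gm := by rw [hb_def]; module
    have ha' : a = μ • Gp + μ⁻¹ • Gm := ha_def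
    have e1 := expand μ⁻¹ (-μ⁻¹) x
    have e2 := expand (-μ⁻¹) μ⁻¹ x
    rw [ha', hb']
    rw [e1, e2, hz1 x, hz2 x]
    simp only [smul_zero, add_zero, zero_add]
    module
  refine ⟨?_, ?_, ?_⟩
  · ext x
    simp only [LinearMap.add_apply, Module.End.mul_apply, LinearMap.smul_apply,
      VAData.opAt, LinearMap.comp_apply, LinearMap.proj_apply]
    rw [key_anticomm S hS ha ha x, haa x]
  · ext x
    simp only [LinearMap.add_apply, Module.End.mul_apply, LinearMap.smul_apply,
      VAData.opAt, LinearMap.comp_apply, LinearMap.proj_apply]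
    have hI : S.B b (Complex.I • S.B b x 0) 0 = Complex.I • S.B b (S.B b x 0) 0 := by simp
    rw [hI, smul_smul, Complex.I_mul_I, ← smul_add, key_anticomm S hS hb hb x, hbb x]
    module
  · ext x
    simp only [LinearMap.add_apply, Module.End.mul_apply, LinearMap.smul_apply,
      VAData.opAt, LinearMap.comp_apply, LinearMap.proj_apply, LinearMap.zero_apply]
    have h1 : S.B a (Complex.I • S.B b x 0) 0 = Complex.I • S.B a (S.B b x 0) 0 := by simp
    have k1 := key_anticomm S hS ha hb x
    have k2 := key_anticomm S hS hb ha x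
    have h2 : S.B (S.B a b 0) x 0 = S.B (S.B b a 0) x 0 := by rw [← k1, ← k2]; abel
    have h0 : S.B (S.B a b 0) x 0 = 0 := by
      have h3 := hab x
      rw [← h2] at h3
      have h4 : (2 : ℂ) • S.B (S.B a b 0) x 0 = 0 := by rw [two_smul]; exact h3
      have := smul_eq_zero.mp h4
      simpa using this
    rw [h1, ← smul_add, k1, h0, smul_zero]
end
end
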